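/- arXiv:1510.05774 — 3 statements merged into one kernel-verified Lean document; each statement's English description precedes it below -/
import Mathlib

section
/- Let A be an arena with recharge weight function w such that every vertex is of exactly one of three types: a recharge-vertex (all incoming edges labelled R), a zero-vertex (all incoming edges have weight 0), or a decrement-vertex (all incoming edges have strictly negative weight), and let Ω color recharge-vertices 2, decrement-vertices 1, and zero-vertices 0. Then Player 0 wins the parity game (A, Parity(Ω)) if, and only if, there exists a capacity cap ∈ ℕ such that Player 0 wins the recharge game (A, Recharge(w, cap)). -/
/-- An arena: a directed graph without terminal vertices, a set `V0` of Player 0's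
vertices (Player 1 controls the complement), and an initial vertex. -/
structure Arena (V : Type) where
  V0 : Set V
  E : V → V → Prop
  vI : V
  succ : ∀ v, ∃ v', E v v'

/-- A play: an infinite path starting in the initial vertex. -/
def Arena.Play {V : Type} (A : Arena V) (ρ : ℕ → V) : Prop :=
  ρ 0 = A.vI ∧ ∀ n, A.E (ρ n) (ρ (n + 1))

/-- The play prefix `ρ 0 ⋯ ρ n` as a list. -/
def prefixList {V : Type} (ρ : ℕ → V) (n : ℕ) : List V :=
  (List.range (n + 1)).map ρ

/-- A strategy for the player controlling the vertices in `p`. -/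
def Arena.IsStrategy {V : Type} (A : Arena V) (p : Set V) (σ : List V → V) : Prop :=
  ∀ (h : List V) (v : V), v ∈ p → A.E v (σ (h ++ [v]))

/-- Consistency of a play with a strategy of the player controlling `p`. -/
def Arena.ConsistentWith {V : Type} (A : Arena V) (p : Set V) (σ : List V → V) (ρ : ℕ → V) : Prop :=
  ∀ n, ρ n ∈ p → ρ (n + 1) = σ (prefixList ρ n)

/-- `σ` is a winning strategy for the player controlling `p` with objective `Obj`. -/
def Arena.WinningStrategy {V : Type} (A : Arena V) (p : Set V) (Obj : Set (ℕ → V))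
    (σ : List V → V) : Prop :=
  A.IsStrategy p σ ∧ ∀ ρ, A.Play ρ → A.ConsistentWith p σ ρ → ρ ∈ Obj

/-- Player 0 wins the game `(A, Win)`. -/
def Arena.Player0Wins {V : Type} (A : Arena V) (Win : Set (ℕ → V)) : Prop :=
  ∃ σ, A.WinningStrategy A.V0 Win σ

/-- `h` is a finite play prefix consistent with the strategy `σ` of the player controlling `p`. -/
def Arena.FinPrefix {V : Type} (A : Arena V) (p : Set V) (σ : List V → V) (h : List V) : Prop :=
  ∃ ρ n, A.Play ρ ∧ A.ConsistentWith p σ ρ ∧ h = prefixList ρ n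

/-- A positional strategy only depends on the last vertex. -/
def Positional {X : Type} (σ : List X → X) : Prop :=
  ∀ (h : List X) (v : X), σ (h ++ [v]) = σ [v]

/-- The energy level of the play prefix `ρ 0 ⋯ ρ n` is `EL w ρ n`:
the sum of the weights of its `n` edges. -/
def EL {V : Type} (w : V → V → ℤ) (ρ : ℕ → V) (n : ℕ) : ℤ :=
  ∑ i ∈ Finset.range n, w (ρ i) (ρ (i + 1))

/-- The energy level of a finite play prefix given as a list. -/
def ELl {V : Type} (w : V → V → ℤ) : List V → ℤ
  | [] => 0
  | [_] => 0
  | a :: b :: l => w a b + ELl w (b :: l)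

/-- The average accumulated energy of the first `n` prefixes. -/
noncomputable def avgEL {V : Type} (w : V → V → ℤ) (ρ : ℕ → V) (n : ℕ) : ℝ :=
  (∑ i ∈ Finset.range n, (EL w ρ i : ℝ)) / (n : ℝ)

/-- The lower-bounded energy objective. -/
def EnergyL {V : Type} (w : V → V → ℤ) : Set (ℕ → V) :=
  {ρ | ∀ n, 0 ≤ EL w ρ n}

/-- The lower- and upper-bounded energy objective. -/
def EnergyLU {V : Type} (w : V → V → ℤ) (cap : ℕ) : Set (ℕ → V) :=
  {ρ | ∀ n, 0 ≤ EL w ρ n ∧ EL w ρ n ≤ (cap : ℤ)}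

/-- The average-energy objective: limsup of the averages is at most `t`. -/
def AvgE {V : Type} (w : V → V → ℤ) (t : ℝ) : Set (ℕ → V) :=
  {ρ | Filter.limsup (fun n => (avgEL w ρ n : EReal)) Filter.atTop ≤ (t : EReal)}

/-- The lower-bounded average-energy objective. -/
def AvgEnergyL {V : Type} (w : V → V → ℤ) (t : ℝ) : Set (ℕ → V) :=
  EnergyL w ∩ AvgE w t

/-- The mean-payoff objective. -/
def MP {V : Type} (w : V → V → ℤ) (t : ℝ) : Set (ℕ → V) :=
  {ρ | Filter.limsup (fun n => (((EL w ρ n : ℝ) / (n : ℝ)) : EReal)) Filter.atTop ≤ (t : EReal)}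

/-- A memory structure: initial memory state and update along edges. -/
structure Mem (V M : Type) where
  mI : M
  upd : M → V → V → M

/-- Tracking the memory state along a play. -/
def Mem.track {V M : Type} (mem : Mem V M) (ρ : ℕ → V) : ℕ → M
  | 0 => mem.mI
  | n + 1 => mem.upd (Mem.track mem ρ n) (ρ n) (ρ (n + 1))

def Mem.runAux {V M : Type} (mem : Mem V M) : M → List V → M
  | m, [] => m
  | m, [_] => m
  | m, a :: b :: l => Mem.runAux mem (mem.upd m a b) (b :: l)

/-- `Upd⁺`: the memory state reached along a finite play prefix. -/
def Mem.run {V M : Type} (mem : Mem V M) (h : List V) : M :=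
  Mem.runAux mem mem.mI h

/-- The strategy `σ` is implemented by the memory structure `mem`
(via some next-move function). -/
def Arena.ImplementedBy {V M : Type} (A : Arena V) (mem : Mem V M) (σ : List V → V) : Prop :=
  ∃ nxt : V → M → V, ∀ (h : List V) (v : V), σ (h ++ [v]) = nxt v (mem.run (h ++ [v]))

/-- `σ` is a finite-state strategy of size `k`. -/
def Arena.FiniteStateOfSize {V : Type} (A : Arena V) (k : ℕ) (σ : List V → V) : Prop :=
  ∃ (M : Type) (inst : Fintype M) (mem : Mem V M),
    @Fintype.card M inst = k ∧ A.ImplementedBy mem σ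

/-- The expanded arena `A × M`. -/
def Arena.expand {V M : Type} (A : Arena V) (mem : Mem V M) : Arena (V × M) where
  V0 := {p | p.1 ∈ A.V0}
  E := fun p q => A.E p.1 q.1 ∧ q.2 = mem.upd p.2 p.1 q.1
  vI := (A.vI, mem.mI)
  succ := fun p => by
    obtain ⟨v', h⟩ := A.succ p.1
    exact ⟨(v', mem.upd p.2 p.1 v'), h, rfl⟩

/-- The extended play in `A × M` corresponding to a play in `A`. -/
def extendPlay {V M : Type} (mem : Mem V M) (ρ : ℕ → V) : ℕ → V × M :=
  fun n => (ρ n, Mem.track mem ρ n)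

/-- `(A, Win) ≤_M (A × M, Win')`. -/
def Reduces {V M : Type} (A : Arena V) (mem : Mem V M) (Win : Set (ℕ → V))
    (Win' : Set (ℕ → V × M)) : Prop :=
  ∀ ρ, A.Play ρ → (ρ ∈ Win ↔ extendPlay mem ρ ∈ Win')

/-- A recharge weight function (`none` is the recharge label `R`) assigns
non-positive weights to all (non-recharge) edges. -/
def RechargeWeights {V : Type} (A : Arena V) (w : V → V → Option ℤ) : Prop :=
  ∀ u v, A.E u v → ∀ k : ℤ, w u v = some k → k ≤ 0

/-- The recharge energy level of the prefix `ρ 0 ⋯ ρ n`: the capacity plus the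
accumulated weight since the last `R`-edge. -/
def ELcap {V : Type} (w : V → V → Option ℤ) (cap : ℕ) (ρ : ℕ → V) : ℕ → ℤ
  | 0 => (cap : ℤ)
  | n + 1 =>
    match w (ρ n) (ρ (n + 1)) with
    | none => (cap : ℤ)
    | some k => ELcap w cap ρ n + k

/-- The recharge objective. -/
def Recharge {V : Type} (w : V → V → Option ℤ) (cap : ℕ) : Set (ℕ → V) :=
  {ρ | ∀ n, 0 ≤ ELcap w cap ρ n}

/-- The average of the recharge energy levels of the first `n` prefixes. -/
noncomputable def avgELcap {V : Type} (w : V → V → Option ℤ) (cap : ℕ) (ρ : ℕ → V)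
    (n : ℕ) : ℝ :=
  (∑ i ∈ Finset.range n, (ELcap w cap ρ i : ℝ)) / (n : ℝ)

/-- The average-bounded recharge objective. -/
def AvgRecharge {V : Type} (w : V → V → Option ℤ) (cap : ℕ) (t : ℝ) : Set (ℕ → V) :=
  {ρ | Filter.limsup (fun n => (avgELcap w cap ρ n : EReal)) Filter.atTop ≤ (t : EReal)} ∩
    Recharge w cap

/-- The (max-)parity objective: the maximal color occurring infinitely often is even. -/
def ParityObj {V : Type} (Ω : V → ℕ) : Set (ℕ → V) :=
  {ρ | ∃ c, Even c ∧ {n | Ω (ρ n) = c}.Infinite ∧ ∀ d, {n | Ω (ρ n) = d}.Infinite → d ≤ c}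

/-- Every vertex is of exactly one of three types, and `Ω` colors recharge-vertices
`2`, decrement-vertices `1` and zero-vertices `0`. -/
def ColoredRecharge {V : Type} (A : Arena V) (w : V → V → Option ℤ) (Ω : V → ℕ) : Prop :=
  ∀ v : V,
    (Ω v = 2 ∧ ∀ u, A.E u v → w u v = none) ∨
    (Ω v = 1 ∧ ∀ u, A.E u v → ∃ k : ℤ, w u v = some k ∧ k < 0) ∨
    (Ω v = 0 ∧ ∀ u, A.E u v → w u v = some 0)


set_option linter.unusedVariables false
set_option linter.unusedSectionVars false
set_option linter.unnecessarySimpa false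

namespace S17
open Classical

-- generic stabilization machinery
lemma exists_eq_succ_of_antitone {X : Type} [Fintype X] (C : ℕ → Set X)
    (h : ∀ n, C (n+1) ⊆ C n) : ∃ n, C n = C (n+1) := by
  by_contra hno
  push_neg at hno
  have hstrict : ∀ n, (C (n+1)).ncard < (C n).ncard := by
    intro n
    exact Set.ncard_lt_ncard (HasSubset.Subset.ssubset_of_ne (h n) (Ne.symm (hno n)))
      (Set.toFinite _)
  have key : ∀ n, (C n).ncard + n ≤ (C 0).ncard := by
    intro n
    induction n with
    | zero => simp
    | succ m ih => have := hstrict m; omega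
  have := key ((C 0).ncard + 1)
  omega

lemma exists_eq_succ_of_monotone {X : Type} [Fintype X] (C : ℕ → Set X)
    (h : ∀ n, C n ⊆ C (n+1)) : ∃ n, C n = C (n+1) := by
  obtain ⟨n, hn⟩ := exists_eq_succ_of_antitone (fun n => (C n)ᶜ)
    (fun n => Set.compl_subset_compl.2 (h n))
  exact ⟨n, by simpa using congrArg (·ᶜ) hn⟩

lemma iterate_stab_forever {X : Type} (op : Set X → Set X) (x0 : Set X) (n : ℕ)
    (h : op^[n] x0 = op^[n+1] x0) : ∀ j, n ≤ j → op^[j] x0 = op^[n] x0 := by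
  intro j hj
  obtain ⟨m, rfl⟩ := Nat.exists_eq_add_of_le hj
  clear hj
  induction m with
  | zero => rfl
  | succ i ih =>
    have : n + (i+1) = (n + i) + 1 := by omega
    rw [this, Function.iterate_succ_apply', ih]
    have h' := h.symm
    rw [Function.iterate_succ_apply'] at h'
    exact h'


section Game

variable {V : Type} [Fintype V] (A : Arena V) (w : V → V → Option ℤ)

/-- One step of Player 1's attractor computation towards `Z`. -/
def Attop (Z S : Set V) : Set V :=
  Z ∪ S ∪ {x | (x ∈ A.V0 ∧ ∀ v', A.E x v' → v' ∈ S) ∨ (x ∉ A.V0 ∧ ∃ v', A.E x v' ∧ v' ∈ S)}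

def Att (Z : Set V) (n : ℕ) : Set V := (Attop A Z)^[n] ∅

def AttrW (Z : Set V) : Set V := {x | ∃ n, x ∈ Att A Z n}

/-- One step of the flagged forcing computation: Player 1 forces, without crossing a
recharge edge, to reach `Y` after at least one decrement (flag `true`), or to reach the
attractor of `Z` (recharge edges allowed only if they land in that attractor). -/
def Aop (Z Y : Set V) (S : Set (V × Bool)) : Set (V × Bool) :=
  S ∪ {p | p.1 ∈ AttrW A Z} ∪ {p | p.2 = true ∧ p.1 ∈ Y} ∪
  {p | p.1 ∈ A.V0 ∧ ∀ v', A.E p.1 v' →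
      (w p.1 v' = none → v' ∈ AttrW A Z) ∧
      ∀ k : ℤ, w p.1 v' = some k → (v', p.2 || decide (k < 0)) ∈ S} ∪
  {p | p.1 ∉ A.V0 ∧ ∃ v', A.E p.1 v' ∧
      ((w p.1 v' = none ∧ v' ∈ AttrW A Z) ∨
        ∃ k : ℤ, w p.1 v' = some k ∧ (v', p.2 || decide (k < 0)) ∈ S)}

def Ast (Z Y : Set V) (n : ℕ) : Set (V × Bool) := (Aop A w Z Y)^[n] ∅

def AW (Z Y : Set V) : Set (V × Bool) := {p | ∃ n, p ∈ Ast A w Z Y n}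

def Yop (Z Y : Set V) : Set V := {u | (u, false) ∈ AW A w Z Y}

def Yit (Z : Set V) (k : ℕ) : Set V := (Yop A w Z)^[k] Set.univ

def Zop (Z : Set V) : Set V := ⋂ k, Yit A w Z k

def Zit (j : ℕ) : Set V := (Zop A w)^[j] ∅

lemma Att_succ (Z : Set V) (n : ℕ) : Att A Z (n+1) = Attop A Z (Att A Z n) :=
  Function.iterate_succ_apply' _ _ _

lemma Ast_succ (Z Y : Set V) (n : ℕ) : Ast A w Z Y (n+1) = Aop A w Z Y (Ast A w Z Y n) :=
  Function.iterate_succ_apply' _ _ _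

lemma Yit_succ (Z : Set V) (k : ℕ) : Yit A w Z (k+1) = Yop A w Z (Yit A w Z k) :=
  Function.iterate_succ_apply' _ _ _

lemma Zit_succ (j : ℕ) : Zit A w (j+1) = Zop A w (Zit A w j) :=
  Function.iterate_succ_apply' _ _ _

-- monotonicity
lemma Attop_mono {Z Z' S S' : Set V} (hZ : Z ⊆ Z') (hS : S ⊆ S') :
    Attop A Z S ⊆ Attop A Z' S' := by
  intro x hx
  rcases hx with (h | h) | h
  · exact Or.inl (Or.inl (hZ h))
  · exact Or.inl (Or.inr (hS h))
  · refine Or.inr ?_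
    rcases h with ⟨h1, h2⟩ | ⟨h1, v', h2, h3⟩
    · exact Or.inl ⟨h1, fun v' hv => hS (h2 v' hv)⟩
    · exact Or.inr ⟨h1, v', h2, hS h3⟩

lemma Att_mono_n (Z : Set V) (n : ℕ) : Att A Z n ⊆ Att A Z (n+1) := by
  induction n with
  | zero => simp [Att]
  | succ m ih =>
    rw [Att_succ, Att_succ]
    exact Attop_mono A (le_refl Z) ih

lemma Att_mono_le (Z : Set V) {m n : ℕ} (h : m ≤ n) : Att A Z m ⊆ Att A Z n := by
  induction n with
  | zero => simpa [Nat.le_zero.1 h] using subset_rfl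
  | succ k ih =>
    rcases Nat.lt_or_ge m (k+1) with h' | h'
    · exact (ih (by omega)).trans (Att_mono_n A Z k)
    · have : m = k + 1 := by omega
      subst this; rfl

lemma Att_mono_Z {Z Z' : Set V} (hZ : Z ⊆ Z') (n : ℕ) : Att A Z n ⊆ Att A Z' n := by
  induction n with
  | zero => simp [Att]
  | succ m ih =>
    rw [Att_succ, Att_succ]
    exact Attop_mono A hZ ih

lemma AttrW_mono {Z Z' : Set V} (hZ : Z ⊆ Z') : AttrW A Z ⊆ AttrW A Z' := by
  rintro x ⟨n, hn⟩; exact ⟨n, Att_mono_Z A hZ n hn⟩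

lemma Z_subset_AttrW (Z : Set V) : Z ⊆ AttrW A Z := by
  intro x hx
  exact ⟨1, by simp only [Att, Function.iterate_one]; exact Or.inl (Or.inl hx)⟩

lemma Aop_mono {Z Z' Y Y' : Set V} {S S' : Set (V × Bool)}
    (hZ : Z ⊆ Z') (hY : Y ⊆ Y') (hS : S ⊆ S') :
    Aop A w Z Y S ⊆ Aop A w Z' Y' S' := by
  intro p hp
  rcases hp with (((h | h) | h) | h) | h
  · exact Or.inl (Or.inl (Or.inl (Or.inl (hS h))))
  · exact Or.inl (Or.inl (Or.inl (Or.inr (AttrW_mono A hZ h))))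
  · exact Or.inl (Or.inl (Or.inr ⟨h.1, hY h.2⟩))
  · refine Or.inl (Or.inr ⟨h.1, fun v' hv => ?_⟩)
    refine ⟨fun hn => AttrW_mono A hZ ((h.2 v' hv).1 hn), fun k hk => hS ((h.2 v' hv).2 k hk)⟩
  · obtain ⟨h1, v', hv, hbr⟩ := h
    refine Or.inr ⟨h1, v', hv, ?_⟩
    rcases hbr with ⟨hn, ha⟩ | ⟨k, hk, hs⟩
    · exact Or.inl ⟨hn, AttrW_mono A hZ ha⟩
    · exact Or.inr ⟨k, hk, hS hs⟩

lemma Ast_mono_n (Z Y : Set V) (n : ℕ) : Ast A w Z Y n ⊆ Ast A w Z Y (n+1) := by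
  induction n with
  | zero => simp [Ast]
  | succ m ih =>
    rw [Ast_succ, Ast_succ]
    exact Aop_mono A w (le_refl Z) (le_refl Y) ih

lemma Ast_mono_le (Z Y : Set V) {m n : ℕ} (h : m ≤ n) : Ast A w Z Y m ⊆ Ast A w Z Y n := by
  induction n with
  | zero => simpa [Nat.le_zero.1 h] using subset_rfl
  | succ k ih =>
    rcases Nat.lt_or_ge m (k+1) with h' | h'
    · exact (ih (by omega)).trans (Ast_mono_n A w Z Y k)
    · have : m = k + 1 := by omega
      subst this; rfl

lemma Ast_mono_ZY {Z Z' Y Y' : Set V} (hZ : Z ⊆ Z') (hY : Y ⊆ Y') (n : ℕ) :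
    Ast A w Z Y n ⊆ Ast A w Z' Y' n := by
  induction n with
  | zero => simp [Ast]
  | succ m ih =>
    rw [Ast_succ, Ast_succ]
    exact Aop_mono A w hZ hY ih

lemma AW_mono {Z Z' Y Y' : Set V} (hZ : Z ⊆ Z') (hY : Y ⊆ Y') :
    AW A w Z Y ⊆ AW A w Z' Y' := by
  rintro p ⟨n, hn⟩; exact ⟨n, Ast_mono_ZY A w hZ hY n hn⟩

lemma Yop_mono {Z Z' Y Y' : Set V} (hZ : Z ⊆ Z') (hY : Y ⊆ Y') :
    Yop A w Z Y ⊆ Yop A w Z' Y' := fun u hu => AW_mono A w hZ hY hu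

lemma Yit_anti (Z : Set V) (k : ℕ) : Yit A w Z (k+1) ⊆ Yit A w Z k := by
  induction k with
  | zero => intro x _; exact Set.mem_univ x
  | succ m ih =>
    calc Yit A w Z (m+2) = Yop A w Z (Yit A w Z (m+1)) := Yit_succ A w Z (m+1)
      _ ⊆ Yop A w Z (Yit A w Z m) := Yop_mono A w (le_refl Z) ih
      _ = Yit A w Z (m+1) := (Yit_succ A w Z m).symm

lemma Yit_anti_le (Z : Set V) {m n : ℕ} (h : m ≤ n) : Yit A w Z n ⊆ Yit A w Z m := by
  induction n with
  | zero => simpa [Nat.le_zero.1 h] using subset_rfl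
  | succ k ih =>
    rcases Nat.lt_or_ge m (k+1) with h' | h'
    · exact (Yit_anti A w Z k).trans (ih (by omega))
    · have : m = k + 1 := by omega
      subst this; rfl

lemma Yit_mono_Z {Z Z' : Set V} (hZ : Z ⊆ Z') (k : ℕ) : Yit A w Z k ⊆ Yit A w Z' k := by
  induction k with
  | zero => simp [Yit]
  | succ m ih =>
    rw [Yit_succ, Yit_succ]
    exact Yop_mono A w hZ ih

lemma Zop_mono {Z Z' : Set V} (hZ : Z ⊆ Z') : Zop A w Z ⊆ Zop A w Z' := by
  intro x hx
  simp only [Zop, Set.mem_iInter] at hx ⊢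
  exact fun k => Yit_mono_Z A w hZ k (hx k)

lemma Zop_subset_Yit (Z : Set V) (k : ℕ) : Zop A w Z ⊆ Yit A w Z k := by
  intro x hx
  simp only [Zop, Set.mem_iInter] at hx
  exact hx k

/-- The gfp property of `Zop`. -/
lemma Zop_fix (Z : Set V) : Zop A w Z = Yop A w Z (Zop A w Z) := by
  obtain ⟨k, hk⟩ := exists_eq_succ_of_antitone (Yit A w Z) (Yit_anti A w Z)
  have hZopk : Zop A w Z = Yit A w Z k := by
    apply le_antisymm
    · exact Zop_subset_Yit A w Z k
    · intro x hx
      simp only [Zop, Set.mem_iInter]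
      intro j
      rcases le_or_gt k j with h | h
      · have h2 : Yit A w Z j = Yit A w Z k :=
          iterate_stab_forever (Yop A w Z) Set.univ k hk j h
        rw [h2]; exact hx
      · exact Yit_anti_le A w Z (le_of_lt h) hx
  calc Zop A w Z = Yit A w Z k := hZopk
    _ = Yit A w Z (k+1) := hk
    _ = Yop A w Z (Yit A w Z k) := Yit_succ A w Z k
    _ = Yop A w Z (Zop A w Z) := by rw [← hZopk]

lemma Zit_mono (j : ℕ) : Zit A w j ⊆ Zit A w (j+1) := by
  induction j with
  | zero => simp [Zit]
  | succ m ih =>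
    rw [Zit_succ, Zit_succ]
    exact Zop_mono A w ih

/-- The winning region of Player 1 (for the recharge objectives) : the stabilized value. -/
noncomputable def jinf : ℕ :=
  (exists_eq_succ_of_monotone (Zit A w) (Zit_mono A w)).choose

noncomputable def W1 : Set V := Zit A w (jinf A w)

lemma W1_fix : W1 A w = Zop A w (W1 A w) := by
  have h := (exists_eq_succ_of_monotone (Zit A w) (Zit_mono A w)).choose_spec
  calc W1 A w = Zit A w (jinf A w) := rfl
    _ = Zit A w (jinf A w + 1) := h
    _ = Zop A w (Zit A w (jinf A w)) := Zit_succ A w _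
    _ = Zop A w (W1 A w) := rfl

lemma W1_Yop_fix : W1 A w = Yop A w (W1 A w) (W1 A w) := by
  calc W1 A w = Zop A w (W1 A w) := W1_fix A w
    _ = Yop A w (W1 A w) (Zop A w (W1 A w)) := Zop_fix A w _
    _ = Yop A w (W1 A w) (W1 A w) := by rw [← W1_fix A w]

lemma W1_subset_Yit (k : ℕ) : W1 A w ⊆ Yit A w (W1 A w) k := by
  nth_rewrite 1 [W1_fix A w]
  exact Zop_subset_Yit A w _ k

lemma W1_subset_AttrW : W1 A w ⊆ AttrW A (W1 A w) := Z_subset_AttrW A _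


-- ======================== list and play utilities ========================

lemma infinite_of_unbounded {P : ℕ → Prop} (h : ∀ N, ∃ n, N ≤ n ∧ P n) :
    {n | P n}.Infinite := by
  by_contra hfin
  rw [Set.not_infinite] at hfin
  obtain ⟨b, hb⟩ := hfin.bddAbove
  obtain ⟨n, hn1, hn2⟩ := h (b+1)
  have := hb hn2
  omega

lemma bounded_of_finite {P : ℕ → Prop} (h : {n | P n}.Finite) :
    ∃ N, ∀ n, N ≤ n → ¬ P n := by
  obtain ⟨b, hb⟩ := h.bddAbove
  exact ⟨b+1, fun n hn hP => by have := hb hP; omega⟩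

lemma prefixList_length {ρ : ℕ → V} (n : ℕ) : (prefixList ρ n).length = n + 1 := by
  simp [prefixList]

lemma prefixList_getD {ρ : ℕ → V} {n m : ℕ} (h : m < n + 1) (d : V) :
    (prefixList ρ n).getD m d = ρ m := by
  rw [List.getD_eq_getElem _ _ (by simpa [prefixList_length] using h)]
  simp [prefixList]

lemma prefixList_succ {ρ : ℕ → V} (n : ℕ) :
    prefixList ρ (n+1) = prefixList ρ n ++ [ρ (n+1)] := by
  simp [prefixList, List.range_succ]

lemma prefixList_getLast? {ρ : ℕ → V} (n : ℕ) :
    (prefixList ρ n).getLast? = some (ρ n) := by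
  induction n with
  | zero => simp [prefixList, List.range_succ]
  | succ m ih => rw [prefixList_succ]; simp

/-- `h` is a consistent play prefix for the strategy `σ` of Player 0. -/
def Con (σ : List V → V) (h : List V) : Prop :=
  h.head? = some A.vI ∧ List.Chain' A.E h ∧
  ∀ i : ℕ, i + 1 < h.length → h.getD i A.vI ∈ A.V0 → h.getD (i+1) A.vI = σ (h.take (i+1))

lemma Con_single (σ : List V → V) : Con A σ [A.vI] := by
  refine ⟨rfl, List.isChain_singleton _, fun i hi _ => by simp at hi⟩

lemma Con_ne_nil {σ : List V → V} {h : List V} (hc : Con A σ h) : h ≠ [] := by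
  intro hnil; rw [hnil] at hc; simp [Con] at hc

lemma Con_step {σ : List V → V} {h : List V} {x v' : V} (hc : Con A σ h)
    (hx : h.getLast? = some x) (he : A.E x v') (hcomp : x ∈ A.V0 → v' = σ h) :
    Con A σ (h ++ [v']) := by
  obtain ⟨h1, h2, h3⟩ := hc
  have hne : h ≠ [] := by intro hnil; rw [hnil] at hx; simp at hx
  refine ⟨?_, ?_, ?_⟩
  · cases h with
    | nil => exact absurd rfl hne
    | cons a t => simpa using h1
  · refine List.isChain_append.2 ?_
    refine ⟨h2, List.isChain_singleton _, fun y hy z hz => ?_⟩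
    simp only [List.head?_cons, Option.mem_def, Option.some.injEq] at hz
    rw [hx] at hy
    simp only [Option.mem_def, Option.some.injEq] at hy
    rw [← hy, ← hz]
    exact he
  · intro i hi hmem
    simp only [List.length_append, List.length_singleton] at hi
    rcases Nat.lt_or_ge (i+1) h.length with hlt | hge
    · rw [List.getD_append _ _ _ _ (show i < h.length by omega)] at hmem
      rw [List.getD_append _ _ _ _ hlt]
      rw [List.take_append_of_le_length (by omega)]
      exact h3 i hlt hmem
    · have hieq : i + 1 = h.length := by omega
      rw [hieq, List.getD_append_right _ _ _ _ (le_refl _), Nat.sub_self,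
        List.getD_cons_zero, List.take_left]
      apply hcomp
      rw [List.getD_append _ _ _ _ (by omega)] at hmem
      have hh := List.dropLast_append_getLast? x hx
      have hdl : h.dropLast.length = h.length - 1 := by simp
      have hxi : h.getD i A.vI = x := by
        conv_lhs => rw [← hh]
        rw [List.getD_append_right _ _ _ _ (by omega), hdl,
          show i - (h.length - 1) = 0 by omega, List.getD_cons_zero]
      rwa [hxi] at hmem

lemma getD_take {l : List V} {n m : ℕ} (h : m < n) (d : V) :
    (l.take n).getD m d = l.getD m d := by
  rcases Nat.lt_or_ge m l.length with hm | hm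
  · rw [List.getD_eq_getElem _ _ (by simp; omega), List.getD_eq_getElem _ _ hm]
    simp [List.getElem_take]
  · rw [List.getD_eq_default _ _ (by simp; omega), List.getD_eq_default _ _ (by omega)]

lemma chain'_getD {R : V → V → Prop} {l : List V} (h : List.Chain' R l) {i : ℕ} (d : V)
    (hi : i + 1 < l.length) : R (l.getD i d) (l.getD (i+1) d) := by
  rw [List.getD_eq_getElem _ _ (by omega), List.getD_eq_getElem _ _ hi]
  exact List.isChain_iff_getElem.1 h i (by omega)

/-- Limit of a strictly increasing chain of consistent prefixes. -/
lemma limit_play {σ : List V → V} (g : ℕ → List V)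
    (hcon : ∀ i, Con A σ (g i))
    (hext : ∀ i, ∃ t, t ≠ [] ∧ g (i+1) = g i ++ t) :
    ∃ ρ, A.Play ρ ∧ A.ConsistentWith A.V0 σ ρ ∧
      ∀ i n, n < (g i).length → ρ n = (g i).getD n A.vI := by
  have hlen0 : 1 ≤ (g 0).length := by
    have := Con_ne_nil A (hcon 0)
    cases hg : g 0 with
    | nil => exact absurd hg this
    | cons a t => simp [hg]
  have hlensucc : ∀ i, (g i).length + 1 ≤ (g (i+1)).length := by
    intro i
    obtain ⟨t, ht, hgt⟩ := hext i
    rw [hgt, List.length_append]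
    have : 1 ≤ t.length := by
      cases t with | nil => exact absurd rfl ht | cons a t' => simp
    omega
  have hlen : ∀ i, i + 1 ≤ (g i).length := by
    intro i
    induction i with
    | zero => exact hlen0
    | succ m ih => have := hlensucc m; omega
  have hmono : ∀ i m, (g i).length ≤ (g (i+m)).length := by
    intro i m
    induction m with
    | zero => exact le_refl _
    | succ p ihp =>
      have := hlensucc (i+p)
      rw [show i+(p+1) = (i+p)+1 by omega]
      omega
  have hcoh' : ∀ i m n, n < (g i).length → (g (i+m)).getD n A.vI = (g i).getD n A.vI := by
    intro i m
    induction m with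
    | zero => intro n _; rfl
    | succ p ihp =>
      intro n hn
      obtain ⟨t, _, hgt⟩ := hext (i + p)
      rw [show i + (p+1) = (i+p)+1 by omega, hgt,
        List.getD_append _ _ _ _ (lt_of_lt_of_le hn (hmono i p))]
      exact ihp n hn
  have hcoh : ∀ i j, i ≤ j → ∀ n, n < (g i).length → (g j).getD n A.vI = (g i).getD n A.vI := by
    intro i j hij n hn
    obtain ⟨m, rfl⟩ := Nat.exists_eq_add_of_le hij
    exact hcoh' i m n hn
  -- definition of the limit play
  refine ⟨fun n => (g (n+1)).getD n A.vI, ⟨?_, ?_⟩, ?_, ?_⟩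
  · -- starts at vI
    show (g (0+1)).getD 0 A.vI = A.vI
    have h0 := (hcon 1).1
    cases hg : g 1 with
    | nil => rw [hg] at h0; simp at h0
    | cons a t =>
      rw [hg] at h0
      simp only [List.head?_cons, Option.some.injEq] at h0
      simp [h0]
  · -- edges
    intro n
    show A.E ((g (n+1)).getD n A.vI) ((g (n+1+1)).getD (n+1) A.vI)
    have h1 : (g (n+2)).getD n A.vI = (g (n+1)).getD n A.vI :=
      hcoh (n+1) (n+2) (by omega) n (by have := hlen (n+1); omega)
    rw [← h1]
    exact chain'_getD (hcon (n+2)).2.1 A.vI (by have := hlen (n+2); omega)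
  · -- consistency
    intro n hmem
    show (g (n+1+1)).getD (n+1) A.vI = σ (prefixList (fun n => (g (n+1)).getD n A.vI) n)
    have hl2 : n + 2 ≤ (g (n+2)).length := by have := hlen (n+2); omega
    have h1 : (g (n+2)).getD n A.vI = (g (n+1)).getD n A.vI :=
      hcoh (n+1) (n+2) (by omega) n (by have := hlen (n+1); omega)
    have hcomp := (hcon (n+2)).2.2 n (by omega) (by rw [h1]; exact hmem)
    rw [hcomp]
    congr 1
    -- take (n+1) (g (n+2)) = prefixList ρ n
    apply List.ext_getElem
    · simp [prefixList_length, List.length_take]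
      omega
    · intro m hm1 hm2
      have hmn : m < n + 1 := by
        have := hm1
        simp only [List.length_take] at this
        omega
      rw [← List.getD_eq_getElem _ A.vI, ← List.getD_eq_getElem _ A.vI]
      rw [getD_take (by omega)]
      rw [prefixList_getD hmn]
      show (g (n+2)).getD m A.vI = (g (m+1)).getD m A.vI
      exact hcoh (m+1) (n+2) (by omega) m (by have := hlen (m+1); omega)
  · -- agreement with prefixes
    intro i n hn
    show (g (n+1)).getD n A.vI = (g i).getD n A.vI
    rcases le_or_gt i (n+1) with h | h
    · exact hcoh i (n+1) h n hn
    · exact (hcoh (n+1) i (by omega) n (by have := hlen (n+1); omega)).symm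


-- ======================== escape lemmas ========================

lemma AW_iff {Z Y : Set V} {p : V × Bool} : p ∈ AW A w Z Y ↔ ∃ n, p ∈ Ast A w Z Y n :=
  Iff.rfl

lemma AW_out_iff {Z Y : Set V} {p : V × Bool} : p ∉ AW A w Z Y ↔ ∀ n, p ∉ Ast A w Z Y n := by
  simp [AW_iff]

lemma AW_out_base {Z Y : Set V} {x : V} {b : Bool} (h : (x,b) ∉ AW A w Z Y) :
    x ∉ AttrW A Z ∧ ¬(b = true ∧ x ∈ Y) := by
  constructor
  · intro hA
    exact h ⟨1, by
      rw [show (1:ℕ) = 0 + 1 by rfl, Ast_succ]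
      exact Or.inl (Or.inl (Or.inl (Or.inr hA)))⟩
  · rintro ⟨hb, hY⟩
    exact h ⟨1, by
      rw [show (1:ℕ) = 0 + 1 by rfl, Ast_succ]
      exact Or.inl (Or.inl (Or.inr ⟨hb, hY⟩))⟩

lemma infinite_nat_unbdd {s : Set ℕ} (h : s.Infinite) (m : ℕ) : ∃ n ∈ s, m ≤ n := by
  by_contra hno
  push_neg at hno
  exact h (Set.Finite.subset (Set.finite_Icc 0 m) (fun n hn => by
    have := hno n hn
    simp
    omega))

lemma AW_out_P0 {Z Y : Set V} {x : V} {b : Bool} (hx : x ∈ A.V0) (h : (x,b) ∉ AW A w Z Y) :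
    ∃ v', A.E x v' ∧ ((w x v' = none ∧ v' ∉ AttrW A Z) ∨
      ∃ k : ℤ, w x v' = some k ∧ (v', b || decide (k < 0)) ∉ AW A w Z Y) := by
  rw [AW_out_iff] at h
  have key : ∀ n : ℕ, ∃ v', A.E x v' ∧
      ¬((w x v' = none → v' ∈ AttrW A Z) ∧
        ∀ k : ℤ, w x v' = some k → (v', b || decide (k < 0)) ∈ Ast A w Z Y n) := by
    intro n
    have hn := h (n+1)
    rw [Ast_succ] at hn
    by_contra hno
    push_neg at hno
    refine hn (Or.inl (Or.inr ⟨hx, fun v' hv' => ?_⟩))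
    have := hno v'
    tauto
  choose f hf1 hf2 using key
  obtain ⟨v', hv'⟩ := Finite.exists_infinite_fiber f
  rw [Set.infinite_coe_iff] at hv'
  have hmem : ∀ n ∈ f ⁻¹' {v'}, f n = v' := fun n hn => hn
  obtain ⟨n0, hn0⟩ := hv'.nonempty
  have hE : A.E x v' := by rw [← hmem n0 hn0]; exact hf1 n0
  refine ⟨v', hE, ?_⟩
  cases hw : w x v' with
  | none =>
    left
    refine ⟨rfl, ?_⟩
    have := hf2 n0
    rw [hmem n0 hn0] at this
    intro hA
    exact this ⟨fun _ => hA, fun k hk => by rw [hw] at hk; exact absurd hk (by simp)⟩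
  | some k =>
    right
    refine ⟨k, rfl, ?_⟩
    rw [AW_out_iff]
    intro m hm
    obtain ⟨n, hn, hnm⟩ := infinite_nat_unbdd hv' m
    have := hf2 n
    rw [hmem n hn] at this
    refine this ⟨fun hnone => by rw [hw] at hnone; exact absurd hnone (by simp), ?_⟩
    intro k' hk'
    rw [hw] at hk'
    have hkk : k' = k := by injection hk' with hh; omega
    subst hkk
    exact Ast_mono_le A w Z Y hnm hm

lemma AW_out_P1 {Z Y : Set V} {x : V} {b : Bool} (hx : x ∉ A.V0) (h : (x,b) ∉ AW A w Z Y) :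
    ∀ v', A.E x v' → (w x v' = none → v' ∉ AttrW A Z) ∧
      ∀ k : ℤ, w x v' = some k → (v', b || decide (k < 0)) ∉ AW A w Z Y := by
  intro v' hv'
  constructor
  · intro hw hA
    refine h ⟨1, ?_⟩
    rw [show (1:ℕ) = 0 + 1 by rfl, Ast_succ]
    exact Or.inr ⟨hx, v', hv', Or.inl ⟨hw, hA⟩⟩
  · intro k hk hA
    obtain ⟨n, hn⟩ := hA
    refine h ⟨n+1, ?_⟩
    rw [Ast_succ]
    exact Or.inr ⟨hx, v', hv', Or.inr ⟨k, hk, hn⟩⟩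


-- ======================== completeness: Player 0's recharge strategy ========================

noncomputable def rk (v : V) : ℕ := sInf {k | v ∉ Yit A w (W1 A w) k}

lemma rk_nonempty {v : V} (hv : v ∉ W1 A w) : {k | v ∉ Yit A w (W1 A w) k}.Nonempty := by
  by_contra hno
  rw [Set.not_nonempty_iff_eq_empty] at hno
  apply hv
  rw [W1_fix]
  simp only [Zop, Set.mem_iInter]
  intro k
  by_contra hk
  have : k ∈ {k | v ∉ Yit A w (W1 A w) k} := hk
  rw [hno] at this
  exact this

lemma rk_spec {v : V} (hv : v ∉ W1 A w) : v ∉ Yit A w (W1 A w) (rk A w v) :=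
  Nat.sInf_mem (rk_nonempty A w hv)

lemma rk_pos {v : V} (hv : v ∉ W1 A w) : 1 ≤ rk A w v := by
  rcases Nat.eq_zero_or_pos (rk A w v) with h | h
  · have := rk_spec A w hv
    rw [h] at this
    exact absurd (Set.mem_univ v) this
  · exact h

lemma rk_le {v : V} {k : ℕ} (h : v ∉ Yit A w (W1 A w) k) : rk A w v ≤ k := Nat.sInf_le h

noncomputable def kstab (Z : Set V) : ℕ :=
  (exists_eq_succ_of_antitone (Yit A w Z) (Yit_anti A w Z)).choose

lemma Zop_eq_Yit_kstab (Z : Set V) : Zop A w Z = Yit A w Z (kstab A w Z) := by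
  have hk := (exists_eq_succ_of_antitone (Yit A w Z) (Yit_anti A w Z)).choose_spec
  apply le_antisymm
  · exact Zop_subset_Yit A w Z _
  · intro x hx
    simp only [Zop, Set.mem_iInter]
    intro j
    rcases le_or_gt (kstab A w Z) j with h | h
    · have h2 : Yit A w Z j = Yit A w Z (kstab A w Z) :=
        iterate_stab_forever (Yop A w Z) Set.univ _ hk j h
      rw [h2]; exact hx
    · exact Yit_anti_le A w Z (le_of_lt h) hx

noncomputable def m0 : ℕ := kstab A w (W1 A w)

lemma rk_le_m0 {v : V} (hv : v ∉ W1 A w) : rk A w v ≤ m0 A w := by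
  apply rk_le
  intro hmem
  apply hv
  rw [W1_fix]
  rw [Zop_eq_Yit_kstab]
  exact hmem

lemma rk_escape {v : V} (hv : v ∉ W1 A w) :
    (v, false) ∉ AW A w (W1 A w) (Yit A w (W1 A w) (rk A w v - 1)) := by
  have h1 := rk_spec A w hv
  have h2 : rk A w v = (rk A w v - 1) + 1 := by have := rk_pos A w hv; omega
  rw [h2, Yit_succ] at h1
  exact h1

/-- Bound on the absolute value of all weights. -/
noncomputable def Wb : ℕ := Finset.univ.sup (fun p : V × V => ((w p.1 p.2).getD 0).natAbs)

lemma weight_le {x y : V} {k : ℤ} (h : w x y = some k) : k.natAbs ≤ Wb w := by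
  have h2 : ((w x y).getD 0).natAbs ≤ Wb w :=
    Finset.le_sup (f := fun p : V × V => ((w p.1 p.2).getD 0).natAbs) (Finset.mem_univ (x, y))
  rw [h] at h2
  simpa using h2

-- the anchor of a history : the vertex reached by the last non-zero-weight edge
def anchGo : V → V → List V → V
  | _, a, [] => a
  | x, a, y :: t => anchGo y (if w x y = some 0 then a else y) t

def anchor : List V → V
  | [] => A.vI
  | x :: t => anchGo w x x t

lemma anchGo_append (x a y : V) (t : List V) :
    anchGo w x a (t ++ [y]) =
      if w ((x :: t).getLast (List.cons_ne_nil x t)) y = some 0 then anchGo w x a t else y := by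
  induction t generalizing x a with
  | nil => rfl
  | cons z t' ih =>
    show anchGo w z _ (t' ++ [y]) = _
    rw [ih z _]
    congr 1

lemma anchor_append {l : List V} {x : V} (y : V) (hl : l.getLast? = some x) :
    anchor A w (l ++ [y]) = if w x y = some 0 then anchor A w l else y := by
  cases l with
  | nil => simp at hl
  | cons a t =>
    show anchGo w a a (t ++ [y]) = _
    rw [anchGo_append]
    have : (a :: t).getLast (List.cons_ne_nil a t) = x := by
      rw [List.getLast?_eq_getLast (List.cons_ne_nil a t)] at hl
      injection hl
    rw [this]
    rfl

def GoodSucc (l : List V) (x v' : V) : Prop :=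
  A.E x v' ∧ ((w x v' = none ∧ v' ∉ AttrW A (W1 A w)) ∨
    ∃ k : ℤ, w x v' = some k ∧
      (v', decide (k < 0)) ∉ AW A w (W1 A w) (Yit A w (W1 A w) (rk A w (anchor A w l) - 1)))

noncomputable def sigma0 : List V → V := fun l =>
  if hg : ∃ v', GoodSucc A w l ((l.getLast?).getD A.vI) v' then hg.choose
  else (A.succ ((l.getLast?).getD A.vI)).choose

lemma sigma0_strategy : A.IsStrategy A.V0 (sigma0 A w) := by
  intro h v _
  have hL : ((h++[v]).getLast?).getD A.vI = v := by rw [List.getLast?_concat]; rfl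
  show A.E v (sigma0 A w (h ++ [v]))
  rw [sigma0]
  split
  · next hg =>
    convert hg.choose_spec.1 using 2
    exact hL.symm
  · next =>
    convert (A.succ (((h++[v]).getLast?).getD A.vI)).choose_spec using 2
    exact hL.symm

lemma ELcap_none {cap : ℕ} {ρ : ℕ → V} {n : ℕ} (h : w (ρ n) (ρ (n+1)) = none) :
    ELcap w cap ρ (n+1) = cap := by
  simp [ELcap, h]

lemma ELcap_some {cap : ℕ} {ρ : ℕ → V} {n : ℕ} {k : ℤ} (h : w (ρ n) (ρ (n+1)) = some k) :
    ELcap w cap ρ (n+1) = ELcap w cap ρ n + k := by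
  simp [ELcap, h]

/-- The main invariant of the recharge strategy. -/
lemma completeness (hw0 : ∀ u v, A.E u v → ∀ k : ℤ, w u v = some k → k ≤ 0)
    (hvI : A.vI ∉ W1 A w) :
    A.Player0Wins (Recharge w (Wb w * m0 A w)) := by
  set cap := Wb w * m0 A w with hcap
  refine ⟨sigma0 A w, sigma0_strategy A w, ?_⟩
  intro ρ hplay hcons
  have key : ∀ n,
      anchor A w (prefixList ρ n) ∉ W1 A w ∧
      (ρ n, false) ∉ AW A w (W1 A w)
        (Yit A w (W1 A w) (rk A w (anchor A w (prefixList ρ n)) - 1)) ∧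
      (Wb w : ℤ) * rk A w (anchor A w (prefixList ρ n)) ≤ ELcap w cap ρ n := by
    intro n
    induction n with
    | zero =>
      have h0 : prefixList ρ 0 = [A.vI] := by
        simp [prefixList, List.range_succ, hplay.1]
      rw [h0]
      have ha : anchor A w [A.vI] = A.vI := rfl
      rw [ha]
      refine ⟨hvI, by rw [hplay.1]; exact rk_escape A w hvI, ?_⟩
      show (Wb w : ℤ) * rk A w A.vI ≤ (cap : ℤ)
      rw [hcap]
      push_cast
      have := rk_le_m0 A w hvI
      have hWb : (0:ℤ) ≤ (Wb w : ℤ) := by positivity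
      nlinarith [this]
    | succ n ih =>
      obtain ⟨ha, hesc, hel⟩ := ih
      have hE : A.E (ρ n) (ρ (n+1)) := hplay.2 n
      have hlast : (prefixList ρ n).getLast? = some (ρ n) := prefixList_getLast? n
      -- obtain the step property
      have hstep : (w (ρ n) (ρ (n+1)) = none ∧ ρ (n+1) ∉ AttrW A (W1 A w)) ∨
          ∃ k : ℤ, w (ρ n) (ρ (n+1)) = some k ∧
            (ρ (n+1), decide (k < 0)) ∉ AW A w (W1 A w)
              (Yit A w (W1 A w) (rk A w (anchor A w (prefixList ρ n)) - 1)) := by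
        by_cases hx0 : ρ n ∈ A.V0
        · obtain ⟨v', hv'⟩ := AW_out_P0 A w hx0 hesc
          have hex : ∃ v', GoodSucc A w (prefixList ρ n)
              (((prefixList ρ n).getLast?).getD A.vI) v' := by
            rw [hlast]
            exact ⟨v', hv'⟩
          have hval : sigma0 A w (prefixList ρ n) = hex.choose := dif_pos hex
          have hxeq : ρ (n+1) = hex.choose := by rw [hcons n hx0]; exact hval
          have hspec := hex.choose_spec
          generalize hq : hex.choose = y at hspec hxeq
          rw [hlast] at hspec
          simp only [Option.getD_some] at hspec
          rw [hxeq]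
          exact hspec.2
        · have hP1 := AW_out_P1 A w hx0 hesc (ρ (n+1)) hE
          cases hw : w (ρ n) (ρ (n+1)) with
          | none => exact Or.inl ⟨rfl, hP1.1 hw⟩
          | some k => exact Or.inr ⟨k, rfl, hP1.2 k hw⟩
      have hanext : anchor A w (prefixList ρ (n+1)) =
          if w (ρ n) (ρ (n+1)) = some 0 then anchor A w (prefixList ρ n) else ρ (n+1) := by
        rw [prefixList_succ, anchor_append A w (ρ (n+1)) hlast]
      rcases hstep with ⟨hwnone, hout⟩ | ⟨k, hwk, hout⟩
      · -- recharge edge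
        have hW1 : ρ (n+1) ∉ W1 A w := fun hh => hout (W1_subset_AttrW A w hh)
        have hanew : anchor A w (prefixList ρ (n+1)) = ρ (n+1) := by
          rw [hanext, if_neg (by rw [hwnone]; simp)]
        rw [hanew]
        refine ⟨hW1, rk_escape A w hW1, ?_⟩
        rw [ELcap_none w hwnone]
        rw [hcap]
        push_cast
        have := rk_le_m0 A w hW1
        have hWb : (0:ℤ) ≤ (Wb w : ℤ) := by positivity
        nlinarith [this]
      · rcases lt_trichotomy k 0 with hk | hk | hk
        · -- decrement edge
          have hdec : decide (k < 0) = true := by simp [hk]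
          rw [hdec] at hout
          have hYout : ρ (n+1) ∉ Yit A w (W1 A w)
              (rk A w (anchor A w (prefixList ρ n)) - 1) := by
            intro hmem
            exact (AW_out_base A w hout).2 ⟨rfl, hmem⟩
          have hW1 : ρ (n+1) ∉ W1 A w := fun hh => hYout (W1_subset_Yit A w _ hh)
          have hrk : rk A w (ρ (n+1)) ≤ rk A w (anchor A w (prefixList ρ n)) - 1 :=
            rk_le A w hYout
          have hanew : anchor A w (prefixList ρ (n+1)) = ρ (n+1) := by
            rw [hanext, if_neg ?_]
            rw [hwk]
            simp only [Option.some.injEq]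
            omega
          rw [hanew]
          refine ⟨hW1, rk_escape A w hW1, ?_⟩
          rw [ELcap_some w hwk]
          have hkW : -(Wb w : ℤ) ≤ k := by
            have := weight_le w hwk
            omega
          have hra := rk_pos A w ha
          have hWb : (0:ℤ) ≤ (Wb w : ℤ) := by positivity
          have hcast : (rk A w (ρ (n+1)) : ℤ) ≤ (rk A w (anchor A w (prefixList ρ n)) : ℤ) - 1 := by
            have h1 := hrk
            omega
          nlinarith [hel, hkW, hcast, hWb]
        · -- zero edge
          subst hk
          have hdec : decide ((0:ℤ) < 0) = false := by simp
          rw [hdec] at hout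
          have hanew : anchor A w (prefixList ρ (n+1)) = anchor A w (prefixList ρ n) := by
            rw [hanext, if_pos hwk]
          rw [hanew]
          refine ⟨ha, hout, ?_⟩
          rw [ELcap_some w hwk]
          omega
        · exact absurd (hw0 (ρ n) (ρ (n+1)) hE k hwk) (by omega)
  intro n
  obtain ⟨ha, _, hel⟩ := key n
  have hWb : (0:ℤ) ≤ (Wb w : ℤ) := by positivity
  have : (0:ℤ) ≤ (Wb w : ℤ) * rk A w (anchor A w (prefixList ρ n)) := by positivity
  omega


-- ======================== soundness: Player 1 forces bad plays ========================

lemma strat_edge {σ : List V → V} (hσ : A.IsStrategy A.V0 σ) {h : List V} {x : V}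
    (hl : h.getLast? = some x) (hx0 : x ∈ A.V0) : A.E x (σ h) := by
  have hmem : x ∈ h.getLast? := by rw [hl]; rfl
  have := hσ h.dropLast x hx0
  rwa [List.dropLast_append_getLast? x hmem] at this

lemma att_force {σ : List V → V} (hσ : A.IsStrategy A.V0 σ) (Z : Set V) :
    ∀ n (h : List V) (x : V), Con A σ h → h.getLast? = some x → x ∈ Att A Z n →
      ∃ t, Con A σ (h ++ t) ∧ ∃ y, (h ++ t).getLast? = some y ∧ y ∈ Z := by
  intro n
  induction n with
  | zero => intro h x _ _ hx; exact absurd hx (by simp [Att])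
  | succ m ih =>
    intro h x hcon hlast hx
    rw [Att_succ] at hx
    rcases hx with (hx | hx) | hx
    · exact ⟨[], by simpa using hcon, x, by simpa using hlast, hx⟩
    · exact ih h x hcon hlast hx
    · rcases hx with ⟨hx0, hall⟩ | ⟨hx0, v', hE, hv'⟩
      · have hE : A.E x (σ h) := strat_edge A hσ hlast hx0
        have hcon' : Con A σ (h ++ [σ h]) := Con_step A hcon hlast hE (fun _ => rfl)
        obtain ⟨t', ht1, y, ht2, ht3⟩ :=
          ih (h ++ [σ h]) (σ h) hcon' (List.getLast?_concat) (hall (σ h) hE)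
        exact ⟨σ h :: t', by simpa using ht1, y,
          by simpa using ht2, ht3⟩
      · have hcon' : Con A σ (h ++ [v']) :=
          Con_step A hcon hlast hE (fun hmem => absurd hmem hx0)
        obtain ⟨t', ht1, y, ht2, ht3⟩ :=
          ih (h ++ [v']) v' hcon' (List.getLast?_concat) hv'
        exact ⟨v' :: t', by simpa using ht1, y,
          by simpa using ht2, ht3⟩

/-- The key forcing lemma: Player 1 forces, against `σ`, either reaching the attractor of
`Z`, or an `R`-free extension ending in `Y` that contains a decrement (unless the flag
is already set). -/
lemma A_force {σ : List V → V} (hσ : A.IsStrategy A.V0 σ) (Z Y : Set V) :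
    ∀ n (h : List V) (x : V) (b : Bool), Con A σ h → h.getLast? = some x →
      (x, b) ∈ Ast A w Z Y n →
      ∃ t, Con A σ (h ++ t) ∧
        ((∃ y, (h ++ t).getLast? = some y ∧ y ∈ AttrW A Z) ∨
         (∃ y, (h ++ t).getLast? = some y ∧ y ∈ Y ∧
           List.Chain' (fun a c => w a c ≠ none) (x :: t) ∧
           (b = true ∨ ∃ i : ℕ, ∃ k : ℤ, i + 1 < (x :: t).length ∧
             w ((x::t).getD i A.vI) ((x::t).getD (i+1) A.vI) = some k ∧ k < 0))) := by
  intro n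
  induction n with
  | zero => intro h x b _ _ hx; exact absurd hx (by simp [Ast])
  | succ m ih =>
    intro h x b hcon hlast hx
    rw [Ast_succ] at hx
    rcases hx with (((hx | hx) | hx) | hx) | hx
    · exact ih h x b hcon hlast hx
    · exact ⟨[], by simpa using hcon, Or.inl ⟨x, by simpa using hlast, hx⟩⟩
    · refine ⟨[], by simpa using hcon, Or.inr ⟨x, by simpa using hlast, hx.2, ?_, Or.inl hx.1⟩⟩
      exact List.isChain_singleton x
    · -- Player 0's vertex
      obtain ⟨hx0, hall⟩ := hx
      have hE : A.E x (σ h) := strat_edge A hσ hlast hx0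
      have hcon' : Con A σ (h ++ [σ h]) := Con_step A hcon hlast hE (fun _ => rfl)
      have hbr := hall (σ h) hE
      cases hw : w x (σ h) with
      | none =>
        refine ⟨[σ h], hcon', Or.inl ⟨σ h, List.getLast?_concat, hbr.1 hw⟩⟩
      | some k =>
        obtain ⟨t', ht1, hres⟩ :=
          ih (h ++ [σ h]) (σ h) (b || decide (k < 0)) hcon' (List.getLast?_concat)
            (hbr.2 k hw)
        refine ⟨σ h :: t', by simpa using ht1, ?_⟩
        rcases hres with ⟨y, hy1, hy2⟩ | ⟨y, hy1, hy2, hy3, hy4⟩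
        · exact Or.inl ⟨y, by simpa using hy1, hy2⟩
        · refine Or.inr ⟨y, by simpa using hy1, hy2, ?_, ?_⟩
          · exact List.isChain_cons_cons.2 ⟨by rw [hw]; simp, hy3⟩
          · rcases hy4 with hy4 | ⟨i, k', hi, hk', hkneg⟩
            · rw [Bool.or_eq_true] at hy4
              rcases hy4 with hb | hk
              · exact Or.inl hb
              · refine Or.inr ⟨0, k, by simp, ?_, of_decide_eq_true hk⟩
                simpa using hw
            · refine Or.inr ⟨i + 1, k', by simpa using hi, ?_, hkneg⟩
              simpa using hk'
    · -- Player 1's vertex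
      obtain ⟨hx0, v', hE, hbr⟩ := hx
      have hcon' : Con A σ (h ++ [v']) :=
        Con_step A hcon hlast hE (fun hmem => absurd hmem hx0)
      rcases hbr with ⟨hw, hA⟩ | ⟨k, hw, hst⟩
      · exact ⟨[v'], hcon', Or.inl ⟨v', List.getLast?_concat, hA⟩⟩
      · obtain ⟨t', ht1, hres⟩ :=
          ih (h ++ [v']) v' (b || decide (k < 0)) hcon' (List.getLast?_concat) hst
        refine ⟨v' :: t', by simpa using ht1, ?_⟩
        rcases hres with ⟨y, hy1, hy2⟩ | ⟨y, hy1, hy2, hy3, hy4⟩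
        · exact Or.inl ⟨y, by simpa using hy1, hy2⟩
        · refine Or.inr ⟨y, by simpa using hy1, hy2, ?_, ?_⟩
          · exact List.isChain_cons_cons.2 ⟨by rw [hw]; simp, hy3⟩
          · rcases hy4 with hy4 | ⟨i, k', hi, hk', hkneg⟩
            · rw [Bool.or_eq_true] at hy4
              rcases hy4 with hb | hk
              · exact Or.inl hb
              · refine Or.inr ⟨0, k, by simp, ?_, of_decide_eq_true hk⟩
                simpa using hw
            · refine Or.inr ⟨i + 1, k', by simpa using hi, ?_, hkneg⟩
              simpa using hk'


-- ======================== chaining rounds into a bad play ========================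

lemma getD_last {l : List V} (hl : l ≠ []) (d : V) :
    l.getD (l.length - 1) d = (l.getLast?).getD d := by
  have hlp : 1 ≤ l.length := List.length_pos_iff.2 hl
  rw [List.getD_eq_getElem _ _ (by omega), List.getLast?_eq_getLast hl, Option.getD_some,
    List.getLast_eq_getElem]

lemma seg_getD {l t : List V} (hl : l ≠ []) {m : ℕ} (h1 : l.length - 1 ≤ m)
    (h2 : m < (l ++ t).length) (d : V) :
    (((l.getLast?).getD d) :: t).getD (m - (l.length - 1)) d = (l ++ t).getD m d := by
  have hlp : 1 ≤ l.length := List.length_pos_iff.2 hl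
  rcases Nat.eq_or_lt_of_le h1 with heq | hlt
  · rw [← heq, Nat.sub_self, List.getD_cons_zero]
    rw [List.getD_append _ _ _ _ (by omega)]
    exact (getD_last hl d).symm
  · have hge : l.length ≤ m := by omega
    rw [List.getD_append_right _ _ _ _ hge]
    rw [show m - (l.length - 1) = (m - l.length) + 1 by omega, List.getD_cons_succ]

lemma exists_maximal {P : ℕ → Prop} {B : ℕ} (h0 : P 0) (hb : ∀ i, P i → i ≤ B) :
    ∃ i, P i ∧ ¬ P (i+1) := by
  by_contra hno
  push_neg at hno
  have hall : ∀ i, P i := by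
    intro i
    induction i with
    | zero => exact h0
    | succ n ihn => exact hno n ihn
  have := hb (B+1) (hall (B+1))
  omega

/-- A play beating every strategy of Player 0 in both the parity and all recharge games:
eventually recharge-free, with infinitely many decrements. -/
def BadPlay (σ : List V → V) (ρ : ℕ → V) : Prop :=
  A.Play ρ ∧ A.ConsistentWith A.V0 σ ρ ∧
  (∃ N, ∀ n, N ≤ n → w (ρ n) (ρ (n+1)) ≠ none) ∧
  (∀ N, ∃ n, N ≤ n ∧ ∃ k : ℤ, w (ρ n) (ρ (n+1)) = some k ∧ k < 0)

lemma sound {σ : List V → V} (hσ : A.IsStrategy A.V0 σ) :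
    ∀ j (h : List V) (x : V), Con A σ h → h.getLast? = some x → x ∈ Zit A w j →
      ∃ ρ, BadPlay A w σ ρ := by
  intro j
  induction j with
  | zero => intro h x _ _ hx; exact absurd hx (by simp [Zit])
  | succ m ih =>
    intro h x hcon hlast hx
    rw [Zit_succ] at hx
    by_contra hno
    have round : ∀ l u, Con A σ l → l.getLast? = some u → u ∈ Zop A w (Zit A w m) →
        ∃ t, t ≠ [] ∧ Con A σ (l ++ t) ∧
          (∃ y, (l ++ t).getLast? = some y ∧ y ∈ Zop A w (Zit A w m)) ∧
          List.Chain' (fun a c => w a c ≠ none) (u :: t) ∧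
          ∃ i : ℕ, ∃ k : ℤ, i + 1 < (u :: t).length ∧
            w ((u::t).getD i A.vI) ((u::t).getD (i+1) A.vI) = some k ∧ k < 0 := by
      intro l u hconl hlastl hu
      have humem : (u, false) ∈ AW A w (Zit A w m) (Zop A w (Zit A w m)) := by
        have hfix := Zop_fix A w (Zit A w m)
        rw [hfix] at hu
        exact hu
      obtain ⟨n, hn⟩ := humem
      obtain ⟨t, hcont, hres⟩ := A_force A w hσ _ _ n l u false hconl hlastl hn
      rcases hres with ⟨y, hy1, hy2⟩ | ⟨y, hy1, hy2, hy3, hy4⟩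
      · obtain ⟨na, hna⟩ := hy2
        obtain ⟨t2, hcont2, z, hz1, hz2⟩ := att_force A hσ _ na (l ++ t) y hcont hy1 hna
        exact absurd (ih (l ++ t ++ t2) z hcont2 hz1 hz2) hno
      · rcases hy4 with hfalse | ⟨i, k, hi, hk, hkneg⟩
        · exact absurd hfalse (by simp)
        · have htne : t ≠ [] := by
            intro h0; subst h0; simp at hi
          exact ⟨t, htne, hcont, ⟨y, hy1, hy2⟩, hy3, i, k, hi, hk, hkneg⟩
    -- chain the rounds
    have hstep : ∀ p : {l : List V // Con A σ l ∧
          ∃ u, l.getLast? = some u ∧ u ∈ Zop A w (Zit A w m)},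
        ∃ q : {l : List V // Con A σ l ∧
          ∃ u, l.getLast? = some u ∧ u ∈ Zop A w (Zit A w m)},
        ∃ t, t ≠ [] ∧ q.1 = p.1 ++ t ∧
          List.Chain' (fun a c => w a c ≠ none) (((p.1.getLast?).getD A.vI) :: t) ∧
          ∃ i : ℕ, ∃ k : ℤ, i + 1 < ((((p.1.getLast?).getD A.vI)) :: t).length ∧
            w (((((p.1.getLast?).getD A.vI)) :: t).getD i A.vI)
              (((((p.1.getLast?).getD A.vI)) :: t).getD (i+1) A.vI) = some k ∧ k < 0 := by
      rintro ⟨l, hconl, u, hu1, hu2⟩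
      obtain ⟨t, htne, hcont, hy, hchain, hdec⟩ := round l u hconl hu1 hu2
      have hgd : (l.getLast?).getD A.vI = u := by rw [hu1]; rfl
      refine ⟨⟨l ++ t, hcont, hy⟩, t, htne, rfl, ?_, ?_⟩
      · show List.Chain' _ (((l.getLast?).getD A.vI) :: t)
        rw [hgd]
        exact hchain
      · show ∃ i : ℕ, ∃ k : ℤ, _
        rw [hgd]
        exact hdec
    choose f hf using hstep
    have hP0 : Con A σ h ∧ ∃ u, h.getLast? = some u ∧ u ∈ Zop A w (Zit A w m) :=
      ⟨hcon, x, hlast, hx⟩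
    set g : ℕ → {l : List V // Con A σ l ∧
        ∃ u, l.getLast? = some u ∧ u ∈ Zop A w (Zit A w m)} :=
      fun n => f^[n] ⟨h, hP0⟩ with hgdef
    have hgsucc : ∀ n, g (n+1) = f (g n) := fun n => Function.iterate_succ_apply' f n _
    have hg0 : g 0 = ⟨h, hP0⟩ := rfl
    have hext : ∀ i, ∃ t, t ≠ [] ∧ (g (i+1)).1 = (g i).1 ++ t := by
      intro i
      obtain ⟨t, htne, heq, _, _⟩ := hf (g i)
      exact ⟨t, htne, by rw [hgsucc]; exact heq⟩
    obtain ⟨ρ, hplay, hconsρ, hagree⟩ := limit_play A (fun i => (g i).1)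
      (fun i => (g i).2.1) hext
    have hlenmono : ∀ i, h.length + i ≤ (g i).1.length := by
      intro i
      induction i with
      | zero => show h.length + 0 ≤ h.length; omega
      | succ n ihn =>
        obtain ⟨t, htne, heq⟩ := hext n
        rw [heq, List.length_append]
        have : 1 ≤ t.length := by
          cases t with | nil => exact absurd rfl htne | cons a t' => simp
        omega
    have hlen1 : 1 ≤ h.length := List.length_pos_iff.2 (Con_ne_nil A hcon)
    apply hno
    refine ⟨ρ, hplay, hconsρ, ⟨h.length, ?_⟩, ?_⟩
    · -- no recharge edges from position h.length - 1 onwards (h.length suffices)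
      intro n hn
      obtain ⟨i, hPi, hPi1⟩ := exists_maximal (P := fun i => (g i).1.length ≤ n + 1)
        (B := n) (by show (g 0).1.length ≤ n + 1; rw [hg0]; show h.length ≤ n + 1; omega)
        (fun i hi => by have := hlenmono i; omega)
      push_neg at hPi1
      obtain ⟨t, htne, hteq, hchain, _⟩ := hf (g i)
      rw [← hgsucc] at hteq
      have hlle : (g i).1.length - 1 ≤ n := by omega
      have hlub : n + 1 < (g (i+1)).1.length := hPi1
      have hlen2 : (g (i+1)).1.length = (g i).1.length + t.length := by
        rw [hteq, List.length_append]
      have hρn : ρ n = ((g i).1 ++ t).getD n A.vI := by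
        rw [← hteq]
        exact hagree (i+1) n (by omega)
      have hρn1 : ρ (n+1) = ((g i).1 ++ t).getD (n+1) A.vI := by
        rw [← hteq]
        exact hagree (i+1) (n+1) (by omega)
      have hgne : (g i).1 ≠ [] := Con_ne_nil A (g i).2.1
      have hcd := chain'_getD hchain A.vI
        (show (n - ((g i).1.length - 1)) + 1 < t.length + 1 by omega)
      rw [show (n - ((g i).1.length - 1)) + 1 = (n + 1) - ((g i).1.length - 1) by omega] at hcd
      rw [seg_getD hgne hlle (by rw [hteq] at hlub; omega) A.vI] at hcd
      rw [seg_getD hgne (by omega) (by rw [hteq] at hlub; omega) A.vI] at hcd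
      rw [← hρn, ← hρn1] at hcd
      exact hcd
    · -- infinitely many decrement edges
      intro N
      obtain ⟨t, htne, hteq, _, i0, k, hi0, hk, hkneg⟩ := hf (g N)
      rw [← hgsucc] at hteq
      have hgne : (g N).1 ≠ [] := Con_ne_nil A (g N).2.1
      have hlN : h.length + N ≤ (g N).1.length := hlenmono N
      have hlapp : ((g N).1 ++ t).length = (g N).1.length + t.length := List.length_append
      set n := ((g N).1.length - 1) + i0 with hndef
      have hlen2 : (g (N+1)).1.length = (g N).1.length + t.length := by
        rw [hteq, List.length_append]
      have hi0t : i0 + 1 < t.length + 1 := hi0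
      have hn1 : n + 1 < (g (N+1)).1.length := by omega
      have hρn : ρ n = ((g N).1 ++ t).getD n A.vI := by
        rw [← hteq]
        exact hagree (N+1) n (by omega)
      have hρn1 : ρ (n+1) = ((g N).1 ++ t).getD (n+1) A.vI := by
        rw [← hteq]
        exact hagree (N+1) (n+1) (by omega)
      refine ⟨n, by omega, k, ?_, hkneg⟩
      rw [show i0 = n - ((g N).1.length - 1) by omega] at hk
      rw [show (n - ((g N).1.length - 1)) + 1 = (n + 1) - ((g N).1.length - 1) by omega] at hk
      rw [seg_getD hgne (by omega) (by omega) A.vI] at hk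
      rw [seg_getD hgne (by omega) (by omega) A.vI] at hk
      rw [← hρn, ← hρn1] at hk
      exact hk


-- ======================== parity analysis ========================

variable (Ω : V → ℕ)

lemma edge_class (hc : ColoredRecharge A w Ω) {u v : V} (hE : A.E u v) :
    (w u v = none ∧ Ω v = 2) ∨ (∃ k : ℤ, w u v = some k ∧ k < 0 ∧ Ω v = 1) ∨
    (w u v = some 0 ∧ Ω v = 0) := by
  rcases hc v with ⟨hcol, h⟩ | ⟨hcol, h⟩ | ⟨hcol, h⟩
  · exact Or.inl ⟨h u hE, hcol⟩
  · obtain ⟨k, hk, hkneg⟩ := h u hE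
    exact Or.inr (Or.inl ⟨k, hk, hkneg, hcol⟩)
  · exact Or.inr (Or.inr ⟨h u hE, hcol⟩)

lemma color_le_two (hc : ColoredRecharge A w Ω) (v : V) : Ω v ≤ 2 := by
  rcases hc v with ⟨hcol, _⟩ | ⟨hcol, _⟩ | ⟨hcol, _⟩ <;> omega

lemma badplay_not_parity (hc : ColoredRecharge A w Ω) {σ : List V → V} {ρ : ℕ → V}
    (hb : BadPlay A w σ ρ) : ρ ∉ ParityObj Ω := by
  rintro ⟨c, hceven, hcinf, hcmax⟩
  obtain ⟨N, hN⟩ := hb.2.2.1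
  have hdec := hb.2.2.2
  have h1inf : {n | Ω (ρ n) = 1}.Infinite := by
    apply infinite_of_unbounded
    intro M
    obtain ⟨n, hn, k, hk, hkneg⟩ := hdec M
    refine ⟨n+1, by omega, ?_⟩
    rcases edge_class A w Ω hc (hb.1.2 n) with ⟨hw, _⟩ | ⟨k', hw, hkneg', hcol⟩ | ⟨hw, _⟩
    · rw [hw] at hk; cases hk
    · exact hcol
    · rw [hw] at hk; injection hk with hh; omega
  have hc1 : 1 ≤ c := hcmax 1 h1inf
  have hc2 : c = 2 := by
    obtain ⟨n, hn⟩ := hcinf.nonempty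
    have hle := color_le_two A w Ω hc (ρ n)
    rw [Nat.even_iff] at hceven
    have : Ω (ρ n) = c := hn
    omega
  obtain ⟨n, hn, hnge⟩ := infinite_nat_unbdd hcinf (N+1)
  have hncol : Ω (ρ n) = 2 := by rw [hc2] at hn; exact hn
  have hE : A.E (ρ (n-1)) (ρ n) := by
    have := hb.1.2 (n-1)
    rwa [show n - 1 + 1 = n by omega] at this
  rcases edge_class A w Ω hc hE with ⟨hw, _⟩ | ⟨k', hw, hkneg', hcol⟩ | ⟨hw, hcol⟩
  · have := hN (n-1) (by omega)
    rw [show n - 1 + 1 = n by omega] at this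
    exact this hw
  · omega
  · omega

-- ======================== the easy direction ========================

lemma recharge_to_parity (hc : ColoredRecharge A w Ω) {cap : ℕ} {σ : List V → V}
    (hσ : A.WinningStrategy A.V0 (Recharge w cap) σ) :
    A.WinningStrategy A.V0 (ParityObj Ω) σ := by
  refine ⟨hσ.1, ?_⟩
  intro ρ hplay hcons
  have hEL : ∀ n, 0 ≤ ELcap w cap ρ n := hσ.2 ρ hplay hcons
  by_cases h2 : {n | Ω (ρ n) = 2}.Infinite
  · refine ⟨2, by decide, h2, fun d hd => ?_⟩
    obtain ⟨n, hn⟩ := hd.nonempty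
    have : Ω (ρ n) = d := hn
    have := color_le_two A w Ω hc (ρ n)
    omega
  · rw [Set.not_infinite] at h2
    obtain ⟨N, hN⟩ := bounded_of_finite h2
    have hstep : ∀ n, N ≤ n → ELcap w cap ρ (n+1) ≤ ELcap w cap ρ n := by
      intro n hn
      rcases edge_class A w Ω hc (hplay.2 n) with ⟨hw, hcol⟩ | ⟨k, hw, hkneg, hcol⟩ |
        ⟨hw, hcol⟩
      · exact absurd hcol (hN (n+1) (by omega))
      · rw [ELcap_some w hw]; omega
      · rw [ELcap_some w hw]; omega
    have hmono : ∀ n, N ≤ n → ∀ m, n ≤ m → ELcap w cap ρ m ≤ ELcap w cap ρ n := by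
      intro n hn m hm
      obtain ⟨p, rfl⟩ := Nat.exists_eq_add_of_le hm
      induction p with
      | zero => exact le_refl _
      | succ q ihq =>
        have h1 := hstep (n + q) (by omega)
        have h2 := ihq
        rw [show n + (q+1) = (n+q)+1 by omega]
        omega
    have h1fin : {n | Ω (ρ n) = 1}.Finite := by
      by_contra h1inf
      have h1inf' : {n | Ω (ρ n) = 1}.Infinite := h1inf
      have claim : ∀ K : ℕ, ∃ n, N ≤ n ∧ ELcap w cap ρ n ≤ ELcap w cap ρ N - K := by
        intro K
        induction K with
        | zero => exact ⟨N, le_refl N, by omega⟩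
        | succ p ihp =>
          obtain ⟨n, hn, hel⟩ := ihp
          obtain ⟨n', hn', hn'ge⟩ := infinite_nat_unbdd h1inf' (n+1)
          have hn'col : Ω (ρ n') = 1 := hn'
          have hstep' : ELcap w cap ρ n' ≤ ELcap w cap ρ (n'-1) - 1 := by
            have hE : A.E (ρ (n'-1)) (ρ n') := by
              have := hplay.2 (n'-1)
              rwa [show n' - 1 + 1 = n' by omega] at this
            rcases edge_class A w Ω hc hE with ⟨hw, hcol⟩ | ⟨k, hw, hkneg, hcol⟩ |
              ⟨hw, hcol⟩
            · omega
            · have := ELcap_some w (ρ := ρ) (cap := cap) (n := n'-1) (k := k) (by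
                rwa [show n' - 1 + 1 = n' by omega])
              rw [show n' - 1 + 1 = n' by omega] at this
              omega
            · omega
          have hmono' : ELcap w cap ρ (n'-1) ≤ ELcap w cap ρ n :=
            hmono n hn (n'-1) (by omega)
          exact ⟨n', by omega, by push_cast; push_cast at hel; omega⟩
      obtain ⟨n, hn, hel⟩ := claim ((ELcap w cap ρ N).toNat + 1)
      have := hEL n
      have h0 := hEL N
      have : (ELcap w cap ρ N).toNat = ELcap w cap ρ N := Int.toNat_of_nonneg h0
      push_cast at hel
      omega
    obtain ⟨N1, hN1⟩ := bounded_of_finite h1fin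
    have h0inf : {n | Ω (ρ n) = 0}.Infinite := by
      apply infinite_of_unbounded
      intro M
      refine ⟨max M (max N N1), le_max_left _ _, ?_⟩
      set n := max M (max N N1) with hndef
      have hn2 : Ω (ρ n) ≠ 2 := hN n (le_trans (le_max_left _ _) (le_max_right _ _))
      have hn1 : Ω (ρ n) ≠ 1 := hN1 n (le_trans (le_max_right _ _) (le_max_right _ _))
      rcases hc (ρ n) with ⟨hcol, _⟩ | ⟨hcol, _⟩ | ⟨hcol, _⟩ <;> omega
    refine ⟨0, by decide, h0inf, fun d hd => ?_⟩
    obtain ⟨n, hn, hnge⟩ := infinite_nat_unbdd hd (max N N1)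
    have hncol : Ω (ρ n) = d := hn
    have hn2 : Ω (ρ n) ≠ 2 := hN n (le_trans (le_max_left _ _) hnge)
    have hn1 : Ω (ρ n) ≠ 1 := hN1 n (le_trans (le_max_right _ _) hnge)
    rcases hc (ρ n) with ⟨hcol, _⟩ | ⟨hcol, _⟩ | ⟨hcol, _⟩ <;> omega

end Game

end S17


/-- Player 0 wins the three-color parity game iff there is a
capacity `cap` such that Player 0 wins the recharge game with capacity `cap`. -/
theorem parity_iff_exists_cap {V : Type} [Fintype V] (A : Arena V)
    (w : V → V → Option ℤ) (Ω : V → ℕ)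
    (hc : ColoredRecharge A w Ω) :
    A.Player0Wins (ParityObj Ω) ↔ ∃ cap : ℕ, A.Player0Wins (Recharge w cap) := by
  constructor
  · rintro ⟨σ, hσ⟩
    by_cases hvI : A.vI ∈ S17.W1 A w
    · exfalso
      obtain ⟨ρ, hbad⟩ := S17.sound A w hσ.1 (S17.jinf A w) [A.vI] A.vI
        (S17.Con_single A σ) (by simp) hvI
      exact S17.badplay_not_parity A w Ω hc hbad (hσ.2 ρ hbad.1 hbad.2.1)
    · refine ⟨S17.Wb w * S17.m0 A w, S17.completeness A w ?_ hvI⟩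
      intro u v hE k hk
      rcases hc v with ⟨_, h⟩ | ⟨_, h⟩ | ⟨_, h⟩
      · rw [h u hE] at hk; cases hk
      · obtain ⟨k', hk', hneg⟩ := h u hE
        rw [hk'] at hk
        injection hk with hh
        omega
      · rw [h u hE] at hk
        injection hk with hh
        omega
  · rintro ⟨cap, σ, hσ⟩
    exact ⟨σ, S17.recharge_to_parity A w Ω hc hσ⟩
end

section
/- Let A be an arena with n vertices and recharge weight function w, and let W be the largest absolute weight in the image of w. If there exists a capacity cap ∈ ℕ such that Player 0 wins (A, Recharge(w, cap)), then Player 0 wins (A, Recharge(w, 3·(n−1)·W)), and she wins the latter game with a finite-state winning strategy of size three. -/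
/-! ### Auxiliary development for `recharge_cap_bound` -/

namespace RC

open Classical

section Generic

variable {V : Type}

lemma prefixList_concat (ρ : ℕ → V) (n : ℕ) :
    prefixList ρ n = (List.range n).map ρ ++ [ρ n] := by
  simp [prefixList, List.range_succ]

lemma prefixList_succ (ρ : ℕ → V) (n : ℕ) :
    prefixList ρ (n+1) = prefixList ρ n ++ [ρ (n+1)] := by
  simp [prefixList, List.range_succ]

lemma prefixList_getLastD (ρ : ℕ → V) (n : ℕ) (d : V) :
    (prefixList ρ n).getLastD d = ρ n := by
  rw [prefixList_concat, List.getLastD_concat]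

lemma prefixList_congr {ρ ρ' : ℕ → V} {n : ℕ} (h : ∀ i ≤ n, ρ i = ρ' i) :
    prefixList ρ n = prefixList ρ' n := by
  unfold prefixList
  apply List.map_congr_left
  intro i hi
  exact h i (by simpa using Nat.lt_succ_iff.mp (List.mem_range.mp hi))

/-- prepending a vertex to a play -/
def consP (u : V) (ρ : ℕ → V) : ℕ → V
  | 0 => u
  | n+1 => ρ n

@[simp] lemma consP_zero (u : V) (ρ : ℕ → V) : consP u ρ 0 = u := rfl
@[simp] lemma consP_succ (u : V) (ρ : ℕ → V) (n : ℕ) : consP u ρ (n+1) = ρ n := rfl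

lemma consP_prefix (u : V) (ρ : ℕ → V) (n : ℕ) :
    prefixList (consP u ρ) (n+1) = u :: prefixList ρ n := by
  unfold prefixList
  rw [List.range_succ_eq_map]
  simp [List.map_map]

/-- splicing a play after position `m` -/
def splice (ρ : ℕ → V) (m : ℕ) (ρ' : ℕ → V) : ℕ → V :=
  fun j => if j ≤ m then ρ j else ρ' (j - (m+1))

lemma splice_le (ρ : ℕ → V) (m : ℕ) (ρ' : ℕ → V) {j : ℕ} (h : j ≤ m) :
    splice ρ m ρ' j = ρ j := if_pos h

lemma splice_shift (ρ : ℕ → V) (m : ℕ) (ρ' : ℕ → V) (i : ℕ) :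
    splice ρ m ρ' (m+1+i) = ρ' i := by
  unfold splice
  rw [if_neg (by omega)]
  congr 1
  omega

lemma splice_val (ρ : ℕ → V) (m : ℕ) (ρ' : ℕ → V) (h0 : ρ' 0 = ρ (m+1)) {j : ℕ}
    (h : j ≤ m+1) : splice ρ m ρ' j = ρ j := by
  rcases Nat.lt_or_ge j (m+1) with hj | hj
  · exact splice_le _ _ _ (by omega)
  · have : j = m+1 := by omega
    subst this
    have := splice_shift ρ m ρ' 0
    simpa [h0] using this

lemma splice_prefix_le (ρ : ℕ → V) (m : ℕ) (ρ' : ℕ → V) (h0 : ρ' 0 = ρ (m+1)) {j : ℕ}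
    (h : j ≤ m+1) : prefixList (splice ρ m ρ') j = prefixList ρ j :=
  prefixList_congr (fun i hi => splice_val ρ m ρ' h0 (le_trans hi h))

lemma splice_prefix (ρ : ℕ → V) (m : ℕ) (ρ' : ℕ → V) (h0 : ρ' 0 = ρ (m+1)) (i : ℕ) :
    prefixList (splice ρ m ρ') (m+1+i) = prefixList ρ m ++ prefixList ρ' i := by
  induction i with
  | zero =>
    rw [show m + 1 + 0 = m + 1 from rfl, prefixList_succ,
      splice_prefix_le ρ m ρ' h0 (Nat.le_succ m), splice_val ρ m ρ' h0 (le_refl (m+1))]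
    have : prefixList ρ' 0 = [ρ' 0] := by simp [prefixList, List.range_succ]
    rw [this, h0]
  | succ i ih =>
    rw [show m+1+(i+1) = (m+1+i)+1 by omega, prefixList_succ, ih, prefixList_succ]
    rw [show m+1+i+1 = m+1+(i+1) by omega, splice_shift]
    simp

end Generic

end RC

namespace RC

open Classical

section ArenaAux

variable {V : Type} (A : Arena V) (w : V → V → Option ℤ)

/-- the arena `A` with initial vertex replaced by `u` -/
def fromV (u : V) : Arena V := ⟨A.V0, A.E, u, A.succ⟩

@[simp] lemma fromV_E (u : V) : (fromV A u).E = A.E := rfl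
@[simp] lemma fromV_vI (u : V) : (fromV A u).vI = u := rfl

lemma fromV_vI_self : fromV A A.vI = A := rfl

lemma fromV_isStrategy (u : V) (σ : List V → V) :
    (fromV A u).IsStrategy A.V0 σ ↔ A.IsStrategy A.V0 σ := Iff.rfl

lemma fromV_consistent (u : V) (σ : List V → V) (ρ : ℕ → V) :
    (fromV A u).ConsistentWith A.V0 σ ρ ↔ A.ConsistentWith A.V0 σ ρ := Iff.rfl

/-- shift of a strategy by a finite history -/
def shiftStr (σ : List V → V) (p : List V) : List V → V := fun l => σ (p ++ l)

lemma shiftStr_isStrategy {σ : List V → V} (hσ : A.IsStrategy A.V0 σ) (p : List V) :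
    A.IsStrategy A.V0 (shiftStr σ p) := by
  intro h v hv
  have := hσ (p ++ h) v hv
  simpa [shiftStr, List.append_assoc] using this

/-- canonical continuation of a play: next vertex given history and current vertex -/
noncomputable def nxtv (σ : List V → V) (l : List V) (x : V) : V :=
  if x ∈ A.V0 then σ (l ++ [x]) else (A.succ x).choose

/-- canonical trajectory (past history, current vertex) following `σ` from `u` -/
noncomputable def traj (σ : List V → V) (u : V) : ℕ → List V × V
  | 0 => ([], u)
  | j+1 => ((traj σ u j).1 ++ [(traj σ u j).2], nxtv A σ (traj σ u j).1 (traj σ u j).2)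

/-- canonical play following `σ` from `u` -/
noncomputable def bp (σ : List V → V) (u : V) : ℕ → V := fun j => (traj A σ u j).2

@[simp] lemma bp_zero (σ : List V → V) (u : V) : bp A σ u 0 = u := rfl

lemma traj_eq_prefix (σ : List V → V) (u : V) (j : ℕ) :
    (traj A σ u j).1 ++ [bp A σ u j] = prefixList (bp A σ u) j := by
  induction j with
  | zero =>
    show [u] = prefixList (bp A σ u) 0
    simp [prefixList, List.range_succ]
  | succ j ih =>
    rw [prefixList_succ, ← ih]
    rfl

lemma bp_succ (σ : List V → V) (u : V) (j : ℕ) :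
    bp A σ u (j+1) = nxtv A σ (traj A σ u j).1 (bp A σ u j) := rfl

lemma bp_play {σ : List V → V} (hσ : A.IsStrategy A.V0 σ) (u : V) :
    (fromV A u).Play (bp A σ u) := by
  refine ⟨rfl, fun j => ?_⟩
  rw [bp_succ, nxtv]
  by_cases h0 : bp A σ u j ∈ A.V0
  · rw [if_pos h0]
    exact hσ (traj A σ u j).1 (bp A σ u j) h0
  · rw [if_neg h0]
    exact (A.succ (bp A σ u j)).choose_spec

lemma bp_consistent (σ : List V → V) (u : V) :
    A.ConsistentWith A.V0 σ (bp A σ u) := by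
  intro j h0
  rw [bp_succ, nxtv, if_pos h0, traj_eq_prefix]

lemma consP_play {u u' : V} {ρ' : ℕ → V} (hE : A.E u u')
    (h0 : ρ' 0 = u') (h' : ∀ n, A.E (ρ' n) (ρ' (n+1))) :
    (fromV A u).Play (consP u ρ') := by
  refine ⟨rfl, fun n => ?_⟩
  cases n with
  | zero => simpa [h0] using hE
  | succ n => simpa using h' n

lemma consP_consistent {σ : List V → V} {u : V} {ρ' : ℕ → V}
    (hc' : A.ConsistentWith A.V0 (shiftStr σ [u]) ρ')
    (h0 : u ∈ A.V0 → ρ' 0 = σ [u]) :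
    A.ConsistentWith A.V0 σ (consP u ρ') := by
  intro n hn
  cases n with
  | zero =>
    have : prefixList (consP u ρ') 0 = [u] := by simp [prefixList, List.range_succ]
    rw [this]
    simpa using h0 hn
  | succ n =>
    rw [consP_prefix]
    have := hc' n (by simpa using hn)
    simpa [shiftStr] using this

lemma splice_play {ρ : ℕ → V} {m : ℕ} {ρ' : ℕ → V}
    (hρ : A.Play ρ) (h0 : ρ' 0 = ρ (m+1)) (h' : ∀ n, A.E (ρ' n) (ρ' (n+1))) :
    A.Play (splice ρ m ρ') := by
  constructor
  · rw [splice_val ρ m ρ' h0 (by omega)]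
    exact hρ.1
  · intro j
    rcases Nat.lt_or_ge j (m+1) with hj | hj
    · rw [splice_val ρ m ρ' h0 (by omega), splice_val ρ m ρ' h0 (by omega)]
      exact hρ.2 j
    · obtain ⟨i, rfl⟩ : ∃ i, j = m+1+i := ⟨j - (m+1), by omega⟩
      rw [splice_shift, show m+1+i+1 = m+1+(i+1) by omega, splice_shift]
      exact h' i

lemma splice_consistent {σ : List V → V} {ρ : ℕ → V} {m : ℕ} {ρ' : ℕ → V}
    (hc : A.ConsistentWith A.V0 σ ρ) (h0 : ρ' 0 = ρ (m+1))
    (hc' : A.ConsistentWith A.V0 (shiftStr σ (prefixList ρ m)) ρ') :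
    A.ConsistentWith A.V0 σ (splice ρ m ρ') := by
  intro j hj
  rcases Nat.lt_or_ge j (m+1) with hjm | hjm
  · rw [splice_val ρ m ρ' h0 (by omega)] at hj
    rw [splice_val ρ m ρ' h0 (by omega), splice_prefix_le ρ m ρ' h0 (by omega)]
    exact hc j hj
  · obtain ⟨i, rfl⟩ : ∃ i, j = m+1+i := ⟨j - (m+1), by omega⟩
    rw [splice_shift] at hj
    rw [show m+1+i+1 = m+1+(i+1) by omega, splice_shift, splice_prefix ρ m ρ' h0]
    have := hc' i hj
    simpa [shiftStr] using this

/-- sum of the (non-`R`) weights of the first `m` edges -/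
def SW (ρ : ℕ → V) (m : ℕ) : ℤ := ∑ i ∈ Finset.range m, ((w (ρ i) (ρ (i+1))).getD 0)

lemma SW_zero (ρ : ℕ → V) : SW w ρ 0 = 0 := by simp [SW]

lemma SW_succ (ρ : ℕ → V) (m : ℕ) :
    SW w ρ (m+1) = SW w ρ m + (w (ρ m) (ρ (m+1))).getD 0 := by
  simp [SW, Finset.sum_range_succ]

lemma SW_consP (u : V) (ρ' : ℕ → V) (m : ℕ) :
    SW w (consP u ρ') (m+1) = (w u (ρ' 0)).getD 0 + SW w ρ' m := by
  unfold SW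
  rw [Finset.sum_range_succ']
  simp only [consP_succ, consP_zero]
  rw [add_comm]

lemma ELcap_of_no_R (c : ℕ) (ρ : ℕ → V) (m : ℕ)
    (h : ∀ i < m, w (ρ i) (ρ (i+1)) ≠ none) :
    ELcap w c ρ m = (c : ℤ) + SW w ρ m := by
  induction m with
  | zero => simp [ELcap, SW_zero]
  | succ m ih =>
    have hm : ∀ i < m, w (ρ i) (ρ (i+1)) ≠ none := fun i hi => h i (by omega)
    cases hw : w (ρ m) (ρ (m+1)) with
    | none => exact absurd hw (h m (by omega))
    | some k =>
      show (match w (ρ m) (ρ (m+1)) with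
        | none => (c:ℤ) | some k => ELcap w c ρ m + k) = _
      rw [hw, ih hm, SW_succ, hw]
      push_cast
      ring_nf
      rfl

lemma ELcap_shift (c : ℕ) (ρf ρ' : ℕ → V) (m : ℕ)
    (hR : w (ρf m) (ρf (m+1)) = none) (hagree : ∀ i, ρf (m+1+i) = ρ' i) :
    ∀ j, ELcap w c ρf (m+1+j) = ELcap w c ρ' j := by
  intro j
  induction j with
  | zero =>
    show (match w (ρf m) (ρf (m+1)) with
      | none => (c:ℤ) | some k => ELcap w c ρf m + k) = (c:ℤ)
    rw [hR]
  | succ j ih =>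
    show (match w (ρf (m+1+j)) (ρf (m+1+j+1)) with
      | none => (c:ℤ) | some k => ELcap w c ρf (m+1+j) + k) = _
    rw [show m+1+j+1 = m+1+(j+1) by omega, hagree, hagree]
    show _ = (match w (ρ' j) (ρ' (j+1)) with
      | none => (c:ℤ) | some k => ELcap w c ρ' j + k)
    cases hw : w (ρ' j) (ρ' (j+1)) with
    | none => rfl
    | some k => rw [ih]

end ArenaAux

end RC

namespace RC

open Classical

section Game

variable {V : Type} [Fintype V] (A : Arena V) (w : V → V → Option ℤ)

/-- the set of vertices from which Player 0 wins the recharge game for some capacity -/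
def Ywin : Set V :=
  {u | ∃ (c : ℕ) (σ : List V → V), (fromV A u).WinningStrategy A.V0 (Recharge w c) σ}

/-- edge is a recharge edge into the winning region, or leads into `T` -/
def aok (T : Set V) (u v' : V) : Prop :=
  (w u v' = none ∧ v' ∈ Ywin A w) ∨ v' ∈ T

/-- one step of the attractor construction -/
def attrStep (T : Set V) : Set V :=
  {v | (v ∈ A.V0 ∧ ∃ v', A.E v v' ∧ aok A w T v v') ∨
       (v ∉ A.V0 ∧ ∀ v', A.E v v' → aok A w T v v')}

/-- attractor (with rank) towards recharge edges into the winning region -/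
def attr : ℕ → Set V
  | 0 => ∅
  | r+1 => attr r ∪ attrStep A w (attr r)

/-- the full attractor -/
def AttrR : Set V := attr A w (Fintype.card V)

lemma aok_mono {T T' : Set V} (h : T ⊆ T') {u v' : V} :
    aok A w T u v' → aok A w T' u v' := fun hk => hk.imp id (@h v')

lemma attrStep_mono {T T' : Set V} (h : T ⊆ T') : attrStep A w T ⊆ attrStep A w T' := by
  intro v hv
  rcases hv with ⟨h0, v', hE, hk⟩ | ⟨h0, hk⟩
  · exact Or.inl ⟨h0, v', hE, aok_mono A w h hk⟩
  · exact Or.inr ⟨h0, fun v' hE => aok_mono A w h (hk v' hE)⟩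

lemma attr_succ_subset (r : ℕ) : attr A w r ⊆ attr A w (r+1) := Set.subset_union_left

lemma attr_le {r s : ℕ} (h : r ≤ s) : attr A w r ⊆ attr A w s := by
  induction s with
  | zero => rw [Nat.le_zero.mp h]
  | succ s ih =>
    rcases Nat.lt_or_ge r (s+1) with hr | hr
    · exact le_trans (ih (by omega)) (attr_succ_subset A w s)
    · rw [show r = s+1 by omega]

lemma attr_saturates : ∀ r, attr A w r ⊆ AttrR A w := by
  have hstab : ∃ k ≤ Fintype.card V, attr A w (k+1) = attr A w k := by
    by_contra hc
    push_neg at hc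
    have hcard : ∀ k ≤ Fintype.card V + 1, k ≤ (attr A w k).ncard := by
      intro k
      induction k with
      | zero => intro _; omega
      | succ k ih =>
        intro hk
        have h1 : attr A w k ⊂ attr A w (k+1) :=
          ssubset_of_subset_of_ne (attr_succ_subset A w k) (fun he => hc k (by omega) he.symm)
        have := Set.ncard_lt_ncard h1 (Set.toFinite _)
        have := ih (by omega)
        omega
    have h1 := hcard (Fintype.card V + 1) (le_refl _)
    have h2 : (attr A w (Fintype.card V + 1)).ncard ≤ Fintype.card V := by
      have := Set.ncard_le_ncard (Set.subset_univ (attr A w (Fintype.card V + 1)))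
        (Set.toFinite _)
      simpa [Set.ncard_univ] using this
    omega
  obtain ⟨k, hk, hfix⟩ := hstab
  have hstable : ∀ m, k ≤ m → attr A w m = attr A w k := by
    intro m hm
    induction m with
    | zero => rw [Nat.le_zero.mp hm]
    | succ m ih =>
      rcases Nat.lt_or_ge k (m+1) with h1 | h1
      · have hmk := ih (by omega)
        show attr A w m ∪ attrStep A w (attr A w m) = _
        rw [hmk]
        exact hfix
      · rw [show k = m+1 by omega]
  intro r v hv
  rcases Nat.lt_or_ge r (Fintype.card V + 1) with h1 | h1
  · exact attr_le A w (by omega) hv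
  · have := hstable r (by omega)
    rw [this] at hv
    exact attr_le A w hk hv

lemma attrStep_AttrR : attrStep A w (AttrR A w) ⊆ AttrR A w :=
  le_trans (le_trans (Set.subset_union_right)
    (le_of_eq rfl : attr A w (Fintype.card V) ∪ attrStep A w (attr A w (Fintype.card V)) ≤
      attr A w (Fintype.card V + 1))) (attr_saturates A w _)

lemma mem_AttrR_of_edge {v v' : V} (h0 : v ∈ A.V0) (hE : A.E v v')
    (hk : aok A w (AttrR A w) v v') : v ∈ AttrR A w :=
  attrStep_AttrR A w (Or.inl ⟨h0, v', hE, hk⟩)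

/-- rank of a vertex in the attractor -/
noncomputable def rk (v : V) : ℕ := sInf {r | v ∈ attr A w r}

lemma rk_spec {v : V} (hv : v ∈ AttrR A w) :
    1 ≤ rk A w v ∧ rk A w v ≤ Fintype.card V ∧
      v ∈ attrStep A w (attr A w (rk A w v - 1)) := by
  have hne : Fintype.card V ∈ {r : ℕ | v ∈ attr A w r} := hv
  have hmem : v ∈ attr A w (rk A w v) := Nat.sInf_mem ⟨_, hne⟩
  have hle : rk A w v ≤ Fintype.card V := Nat.sInf_le hne
  have h1 : 1 ≤ rk A w v := by
    rcases Nat.eq_zero_or_pos (rk A w v) with h | h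
    · rw [h] at hmem
      exact absurd hmem (by simp [attr])
    · exact h
  refine ⟨h1, hle, ?_⟩
  have hnot : v ∉ attr A w (rk A w v - 1) :=
    Nat.notMem_of_lt_sInf (s := {r : ℕ | v ∈ attr A w r})
      (show rk A w v - 1 < rk A w v by omega)
  have : v ∈ attr A w ((rk A w v - 1) + 1) := by
    rw [show rk A w v - 1 + 1 = rk A w v by omega]
    exact hmem
  rcases this with h | h
  · exact absurd h hnot
  · exact h

lemma rk_le_of_mem {v : V} {r : ℕ} (h : v ∈ attr A w r) : rk A w v ≤ r := Nat.sInf_le h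

/-- a single admissible move in the bounded-drop safety game -/
def dok (S : Set (V × ℕ)) (u v' : V) (b : ℕ) : Prop :=
  (w u v' = none ∧ v' ∈ Ywin A w) ∨ (v' ∈ AttrR A w) ∨
    ∃ (k : ℤ) (b' : ℕ), w u v' = some k ∧ (b : ℤ) + k = (b' : ℤ) ∧ (v', b') ∈ S

lemma dok_mono {S S' : Set (V × ℕ)} (h : S ⊆ S') {u v' : V} {b : ℕ} :
    dok A w S u v' b → dok A w S' u v' b := by
  intro hd
  rcases hd with h1 | h1 | ⟨k, b', h1, h2, h3⟩
  · exact Or.inl h1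
  · exact Or.inr (Or.inl h1)
  · exact Or.inr (Or.inr ⟨k, b', h1, h2, h h3⟩)

/-- one step of the bounded-drop safety game -/
def DStepFun (S : Set (V × ℕ)) : Set (V × ℕ) :=
  {p | (p.1 ∈ A.V0 ∧ ∃ v', A.E p.1 v' ∧ dok A w S p.1 v' p.2) ∨
       (p.1 ∉ A.V0 ∧ ∀ v', A.E p.1 v' → dok A w S p.1 v' p.2)}

def DStep : Set (V × ℕ) →o Set (V × ℕ) where
  toFun := DStepFun A w
  monotone' := by
    intro S S' h p hp
    rcases hp with ⟨h0, v', hE, hd⟩ | ⟨h0, hd⟩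
    · exact Or.inl ⟨h0, v', hE, dok_mono A w h hd⟩
    · exact Or.inr ⟨h0, fun v' hE => dok_mono A w h (hd v' hE)⟩

/-- winning positions of the bounded-drop safety game -/
def Dpred : Set (V × ℕ) := OrderHom.gfp (DStep A w)

lemma Dpred_dest {p : V × ℕ} (h : p ∈ Dpred A w) : p ∈ DStepFun A w (Dpred A w) := by
  have : Dpred A w = DStep A w (Dpred A w) := (OrderHom.map_gfp (DStep A w)).symm
  rw [this] at h
  exact h

lemma Dpred_coind {S : Set (V × ℕ)} (h : S ⊆ DStepFun A w S) : S ⊆ Dpred A w :=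
  OrderHom.le_gfp (DStep A w) h

/-- `v` has some admissible budget -/
def Dfin (v : V) : Prop := ∃ b, (v, b) ∈ Dpred A w

/-- minimal admissible budget -/
noncomputable def mv (v : V) : ℕ := sInf {b | (v, b) ∈ Dpred A w}

lemma mv_mem {v : V} (h : Dfin A w v) : (v, mv A w v) ∈ Dpred A w := Nat.sInf_mem h

lemma mv_le {v : V} {b : ℕ} (h : (v, b) ∈ Dpred A w) : mv A w v ≤ b := Nat.sInf_le h

lemma Dpred_mono_budget : ∀ {v : V} {b c : ℕ}, (v, b) ∈ Dpred A w → b ≤ c →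
    (v, c) ∈ Dpred A w := by
  have hsub : {p : V × ℕ | ∃ b, b ≤ p.2 ∧ (p.1, b) ∈ Dpred A w} ⊆ Dpred A w := by
    apply Dpred_coind
    rintro ⟨v, c⟩ ⟨b, hbc, hb⟩
    have := Dpred_dest A w hb
    rcases this with ⟨h0, v', hE, hd⟩ | ⟨h0, hd⟩
    · refine Or.inl ⟨h0, v', hE, ?_⟩
      rcases hd with h1 | h1 | ⟨k, b', h1, h2, h3⟩
      · exact Or.inl h1
      · exact Or.inr (Or.inl h1)
      · refine Or.inr (Or.inr ⟨k, b' + (c - b), h1, by push_cast; omega, ⟨b', by omega, h3⟩⟩)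
    · refine Or.inr ⟨h0, fun v' hE => ?_⟩
      rcases hd v' hE with h1 | h1 | ⟨k, b', h1, h2, h3⟩
      · exact Or.inl h1
      · exact Or.inr (Or.inl h1)
      · exact Or.inr (Or.inr ⟨k, b' + (c - b), h1, by push_cast; omega, ⟨b', by omega, h3⟩⟩)
  intro v b c hb hbc
  exact hsub ⟨b, hbc, hb⟩

/-- back-propagation along a Player 0 edge -/
lemma Dpred_backprop {u v' : V} {k : ℤ} {b' c : ℕ} (h0 : u ∈ A.V0) (hE : A.E u v')
    (hw : w u v' = some k) (hD : (v', b') ∈ Dpred A w) (hc : (c : ℤ) + k = (b' : ℤ)) :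
    (u, c) ∈ Dpred A w := by
  have hsub : Dpred A w ∪ {(u, c)} ⊆ Dpred A w := by
    apply Dpred_coind
    rintro p (hp | hp)
    · exact (DStep A w).monotone' (Set.subset_union_left) (Dpred_dest A w hp)
    · rw [Set.mem_singleton_iff] at hp
      subst hp
      exact Or.inl ⟨h0, v', hE, Or.inr (Or.inr ⟨k, b', hw, hc, Or.inl hD⟩)⟩
  exact hsub (Or.inr rfl)

end Game

end RC

namespace RC

open Classical

section KeyBound

variable {V : Type} [Fintype V] (A : Arena V) (w : V → V → Option ℤ)

/-- zero-weight edge staying at the same minimal budget, off the attractor -/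
def zedge (ℓ : ℕ) (a b : V) : Prop :=
  A.E a b ∧ w a b = some 0 ∧ b ∉ AttrR A w ∧ Dfin A w b ∧ mv A w b = ℓ

/-- closure of `v` under optimal zero-weight edges -/
def CP (v : V) (ℓ : ℕ) : Set V := {x | Relation.ReflTransGen (zedge A w ℓ) v x}

lemma CP_props {v : V} {ℓ : ℕ} (h1 : Dfin A w v) (h2 : mv A w v = ℓ)
    (h3 : v ∉ AttrR A w) : ∀ x ∈ CP A w v ℓ, Dfin A w x ∧ mv A w x = ℓ ∧ x ∉ AttrR A w := by
  intro x hx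
  induction hx with
  | refl => exact ⟨h1, h2, h3⟩
  | tail _ e _ => exact ⟨e.2.2.2.1, e.2.2.2.2, e.2.2.1⟩

/-- existence of a strictly decreasing optimal move -/
def StrictAt (ℓ : ℕ) (x : V) : Prop :=
  ∃ v'' k, A.E x v'' ∧ w x v'' = some k ∧ k < 0 ∧ v'' ∉ AttrR A w ∧ Dfin A w v'' ∧
    (mv A w v'' : ℤ) = (ℓ : ℤ) + k

lemma CP_no_strict (hneg : RechargeWeights A w) {v : V} {ℓ : ℕ}
    (h1 : Dfin A w v) (h2 : mv A w v = ℓ) (h3 : v ∉ AttrR A w) (hl : 1 ≤ ℓ)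
    (hns : ∀ x ∈ CP A w v ℓ, ¬ StrictAt A w ℓ x) : False := by
  have hsub : (Dpred A w ∪ {p : V × ℕ | p.1 ∈ CP A w v ℓ ∧ ℓ - 1 ≤ p.2}) ⊆ Dpred A w := by
    apply Dpred_coind
    rintro ⟨x, b⟩ (hp | ⟨hx, hb⟩)
    · exact (DStep A w).monotone' Set.subset_union_left (Dpred_dest A w hp)
    · obtain ⟨hDfx, hmx, hxA⟩ := CP_props A w h1 h2 h3 x hx
      have hstep := Dpred_dest A w (mv_mem A w hDfx)
      rcases hstep with ⟨h0, v', hE, hd⟩ | ⟨h0, hd⟩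
      · -- Player 0 vertex
        refine Or.inl ⟨h0, v', hE, ?_⟩
        rcases hd with hgood | hA' | ⟨k, b', hwk, heq, hD'⟩
        · exact absurd (mem_AttrR_of_edge A w h0 hE (Or.inl hgood)) hxA
        · exact absurd (mem_AttrR_of_edge A w h0 hE (Or.inr hA')) hxA
        · have hvA' : v' ∉ AttrR A w := fun hA' =>
            hxA (mem_AttrR_of_edge A w h0 hE (Or.inr hA'))
          have hDf' : Dfin A w v' := ⟨b', hD'⟩
          have hle : mv A w v' ≤ b' := mv_le A w hD'
          have hkneg : k ≤ 0 := hneg x v' hE k hwk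
          obtain ⟨c, hc⟩ : ∃ c : ℕ, (c : ℤ) + k = (mv A w v' : ℤ) :=
            ⟨((mv A w v' : ℤ) - k).toNat, by
              rw [Int.toNat_of_nonneg (by omega)]; omega⟩
          have hbp := Dpred_backprop A w h0 hE hwk (mv_mem A w hDf') hc
          have hlc : ℓ ≤ c := hmx ▸ mv_le A w hbp
          rw [hmx] at heq
          have hEq : (mv A w v' : ℤ) = (ℓ : ℤ) + k := by omega
          rcases lt_or_eq_of_le hkneg with hk0 | hk0
          · exact absurd ⟨v', k, hE, hwk, hk0, hvA', hDf', hEq⟩ (hns x hx)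
          · have hwk0 : w x v' = some 0 := by rw [hwk, ← hk0]
            have hmv' : mv A w v' = ℓ := by omega
            have hCP' : v' ∈ CP A w v ℓ :=
              Relation.ReflTransGen.tail hx ⟨hE, hwk0, hvA', hDf', hmv'⟩
            exact Or.inr (Or.inr ⟨0, b, hwk0, by omega, Or.inr ⟨hCP', hb⟩⟩)
      · -- Player 1 vertex
        refine Or.inr ⟨h0, fun v' hE => ?_⟩
        rcases hd v' hE with hgood | hA' | ⟨k, b', hwk, heq, hD'⟩
        · exact Or.inl hgood
        · exact Or.inr (Or.inl hA')
        · by_cases hA' : v' ∈ AttrR A w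
          · exact Or.inr (Or.inl hA')
          · have hDf' : Dfin A w v' := ⟨b', hD'⟩
            have hle : mv A w v' ≤ b' := mv_le A w hD'
            have hkneg : k ≤ 0 := hneg x v' hE k hwk
            rw [hmx] at heq
            by_cases hsmall : (mv A w v' : ℤ) ≤ (ℓ : ℤ) - 1 + k
            · have hbk : 0 ≤ (b : ℤ) + k := by
                have : ((ℓ - 1 : ℕ) : ℤ) = (ℓ : ℤ) - 1 := by omega
                have hb' : ((ℓ : ℤ) - 1) ≤ (b : ℤ) := by
                  have := hb; omega
                omega
              refine Or.inr (Or.inr ⟨k, ((b : ℤ) + k).toNat, hwk, by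
                rw [Int.toNat_of_nonneg hbk], Or.inl ?_⟩)
              apply Dpred_mono_budget A w (mv_mem A w hDf')
              have : ((ℓ - 1 : ℕ) : ℤ) = (ℓ : ℤ) - 1 := by omega
              have hb' : ((ℓ : ℤ) - 1) ≤ (b : ℤ) := by
                have := hb; omega
              omega
            · have hEq : (mv A w v' : ℤ) = (ℓ : ℤ) + k := by omega
              rcases lt_or_eq_of_le hkneg with hk0 | hk0
              · exact absurd ⟨v', k, hE, hwk, hk0, hA', hDf', hEq⟩ (hns x hx)
              · have hwk0 : w x v' = some 0 := by rw [hwk, ← hk0]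
                have hmv' : mv A w v' = ℓ := by omega
                have hCP' : v' ∈ CP A w v ℓ :=
                  Relation.ReflTransGen.tail hx ⟨hE, hwk0, hA', hDf', hmv'⟩
                exact Or.inr (Or.inr ⟨0, b, hwk0, by omega, Or.inr ⟨hCP', hb⟩⟩)
  have hmem : (v, ℓ - 1) ∈ Dpred A w :=
    hsub (Or.inr ⟨Relation.ReflTransGen.refl, le_refl _⟩)
  have := mv_le A w hmem
  omega

/-- the vertices with small positive minimal budget off the attractor -/
noncomputable def Sfin (ℓ : ℕ) : Finset V :=
  Finset.univ.filter (fun x => x ∉ AttrR A w ∧ Dfin A w x ∧ 1 ≤ mv A w x ∧ mv A w x ≤ ℓ)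

lemma descent (W : ℕ) (hneg : RechargeWeights A w)
    (hW : ∀ u v, A.E u v → ∀ k : ℤ, w u v = some k → -(W : ℤ) ≤ k) :
    ∀ ℓ v, Dfin A w v → v ∉ AttrR A w → mv A w v = ℓ → 1 ≤ ℓ →
      (∃ x, Dfin A w x ∧ mv A w x = 0) ∧ ℓ ≤ W * (Sfin A w ℓ).card := by
  intro ℓ
  induction ℓ using Nat.strong_induction_on with
  | _ ℓ IH =>
  intro v hDf hA hmv hl
  have hstrict : ∃ x ∈ CP A w v ℓ, StrictAt A w ℓ x := by
    by_contra hc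
    push_neg at hc
    exact CP_no_strict A w hneg hDf hmv hA hl hc
  obtain ⟨x, hxCP, v'', k, hE, hwk, hk, hA'', hDf'', hm''⟩ := hstrict
  obtain ⟨hDfx, hmx, hxA⟩ := CP_props A w hDf hmv hA x hxCP
  have hxS : x ∈ Sfin A w ℓ := by
    simp only [Sfin, Finset.mem_filter, Finset.mem_univ, true_and]
    exact ⟨hxA, hDfx, by omega, le_of_eq hmx⟩
  have hkW : -(W : ℤ) ≤ k := hW x v'' hE k hwk
  rcases Nat.eq_zero_or_pos (mv A w v'') with h0 | h0
  · refine ⟨⟨v'', hDf'', h0⟩, ?_⟩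
    have hcard : 1 ≤ (Sfin A w ℓ).card := Finset.card_pos.mpr ⟨x, hxS⟩
    have hlW : ℓ ≤ W := by omega
    calc ℓ ≤ W := hlW
      _ = W * 1 := (mul_one W).symm
      _ ≤ W * (Sfin A w ℓ).card := Nat.mul_le_mul_left W hcard
  · have hlt : mv A w v'' < ℓ := by omega
    obtain ⟨hx0, hbound⟩ := IH (mv A w v'') hlt v'' hDf'' hA'' rfl h0
    refine ⟨hx0, ?_⟩
    have hsub2 : Sfin A w (mv A w v'') ⊆ Sfin A w ℓ := by
      intro y hy
      simp only [Sfin, Finset.mem_filter, Finset.mem_univ, true_and] at hy ⊢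
      exact ⟨hy.1, hy.2.1, hy.2.2.1, by omega⟩
    have hxnot : x ∉ Sfin A w (mv A w v'') := by
      simp only [Sfin, Finset.mem_filter, Finset.mem_univ, true_and]
      rintro ⟨-, -, -, hle⟩
      omega
    have hcard : (Sfin A w (mv A w v'')).card + 1 ≤ (Sfin A w ℓ).card := by
      have h1 : insert x (Sfin A w (mv A w v'')) ⊆ Sfin A w ℓ :=
        Finset.insert_subset hxS hsub2
      have h2 := Finset.card_le_card h1
      rw [Finset.card_insert_of_notMem hxnot] at h2
      omega
    have hstep : ℓ ≤ mv A w v'' + W := by omega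
    calc ℓ ≤ mv A w v'' + W := hstep
      _ ≤ W * (Sfin A w (mv A w v'')).card + W := by omega
      _ = W * ((Sfin A w (mv A w v'')).card + 1) := by ring
      _ ≤ W * (Sfin A w ℓ).card := Nat.mul_le_mul_left W hcard

/-- **Key bound**: off the attractor, the minimal budget is at most `(n-1)·W`. -/
lemma mv_le_bound (W : ℕ) (hneg : RechargeWeights A w)
    (hW : ∀ u v, A.E u v → ∀ k : ℤ, w u v = some k → -(W : ℤ) ≤ k)
    {v : V} (hDf : Dfin A w v) (hA : v ∉ AttrR A w) :
    mv A w v ≤ (Fintype.card V - 1) * W := by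
  rcases Nat.eq_zero_or_pos (mv A w v) with h0 | h0
  · omega
  · obtain ⟨⟨x, hDfx, hx0⟩, hb⟩ := descent A w W hneg hW (mv A w v) v hDf hA rfl h0
    have hxnot : x ∉ Sfin A w (mv A w v) := by
      simp only [Sfin, Finset.mem_filter, Finset.mem_univ, true_and]
      rintro ⟨-, -, h1, -⟩
      omega
    have hsub : Sfin A w (mv A w v) ⊆ Finset.univ.erase x :=
      fun y hy => Finset.mem_erase.mpr ⟨fun he => hxnot (he ▸ hy), Finset.mem_univ y⟩
    have hcard : (Sfin A w (mv A w v)).card ≤ Fintype.card V - 1 := by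
      have := Finset.card_le_card hsub
      rw [Finset.card_erase_of_mem (Finset.mem_univ x)] at this
      simpa using this
    calc mv A w v ≤ W * (Sfin A w (mv A w v)).card := hb
      _ ≤ W * (Fintype.card V - 1) := Nat.mul_le_mul_left W hcard
      _ = (Fintype.card V - 1) * W := mul_comm _ _

lemma Dpred_at_bound (W : ℕ) (hneg : RechargeWeights A w)
    (hW : ∀ u v, A.E u v → ∀ k : ℤ, w u v = some k → -(W : ℤ) ≤ k)
    {v : V} (hDf : Dfin A w v) (hA : v ∉ AttrR A w) :
    (v, (Fintype.card V - 1) * W) ∈ Dpred A w :=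
  Dpred_mono_budget A w (mv_mem A w hDf) (mv_le_bound A w W hneg hW hDf hA)

end KeyBound

end RC

namespace RC

open Classical

section Completeness

variable {V : Type} [Fintype V] (A : Arena V) (w : V → V → Option ℤ)

/-- the first `m` edges are weighted and do not enter the attractor -/
def NoExit (ρ : ℕ → V) (m : ℕ) : Prop :=
  ∀ i < m, w (ρ i) (ρ (i+1)) ≠ none ∧ ρ (i+1) ∉ AttrR A w

/-- semantic safety of a play with budget `b` -/
def condP (ρ : ℕ → V) (b : ℕ) : Prop :=
  ∀ m, NoExit A w ρ m →
    (0 ≤ (b : ℤ) + SW w ρ m) ∧ (w (ρ m) (ρ (m+1)) = none → ρ (m+1) ∈ Ywin A w)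

/-- semantic winning positions of the bounded-drop game -/
def Cand : Set (V × ℕ) :=
  {p | ∃ σ, A.IsStrategy A.V0 σ ∧
    ∀ ρ, (fromV A p.1).Play ρ → A.ConsistentWith A.V0 σ ρ → condP A w ρ p.2}

lemma canon_play {σ : List V → V} (hσ : A.IsStrategy A.V0 σ) {u u' : V} (hE : A.E u u')
    (h0 : u ∈ A.V0 → u' = σ [u]) :
    (fromV A u).Play (consP u (bp A (shiftStr σ [u]) u')) ∧
      A.ConsistentWith A.V0 σ (consP u (bp A (shiftStr σ [u]) u')) := by
  have hb := bp_play A (shiftStr_isStrategy A hσ [u]) u'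
  constructor
  · exact consP_play A hE rfl hb.2
  · exact consP_consistent A (bp_consistent A _ u')
      (fun h => by rw [show bp A (shiftStr σ [u]) u' 0 = u' from rfl]; exact h0 h)

lemma Cand_shift {u u' : V} {b b' : ℕ} {k : ℤ} {σ : List V → V}
    (hσ : A.IsStrategy A.V0 σ)
    (hcond : ∀ ρ, (fromV A u).Play ρ → A.ConsistentWith A.V0 σ ρ → condP A w ρ b)
    (hE : A.E u u') (hwk : w u u' = some k) (hA' : u' ∉ AttrR A w)
    (hbk : (b : ℤ) + k = (b' : ℤ)) (h0 : u ∈ A.V0 → u' = σ [u]) :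
    (u', b') ∈ Cand A w := by
  refine ⟨shiftStr σ [u], shiftStr_isStrategy A hσ [u], ?_⟩
  intro ρ' hP' hC'
  have hr0 : ρ' 0 = u' := hP'.1
  have hPf : (fromV A u).Play (consP u ρ') := consP_play A hE hr0 hP'.2
  have hCf : A.ConsistentWith A.V0 σ (consP u ρ') :=
    consP_consistent A hC' (fun h => by rw [hr0]; exact h0 h)
  have hcf := hcond (consP u ρ') hPf hCf
  intro m hNE
  have hNEf : NoExit A w (consP u ρ') (m+1) := by
    intro i hi
    cases i with
    | zero =>
      refine ⟨by simp [hr0, hwk], ?_⟩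
      show ρ' 0 ∉ AttrR A w
      rw [hr0]
      exact hA'
    | succ i =>
      have := hNE i (by omega)
      simpa using this
  have hmain := hcf (m+1) hNEf
  have hSW : SW w (consP u ρ') (m+1) = k + SW w ρ' m := by
    rw [SW_consP, hr0, hwk]
    rfl
  constructor
  · have := hmain.1
    rw [hSW] at this
    omega
  · intro hwn
    have := hmain.2
    simpa using this (by simpa using hwn)

lemma Ywin_to_Cand {u : V} (hu : u ∈ Ywin A w) : ∃ c, (u, c) ∈ Cand A w := by
  obtain ⟨c, σ, hσS, hσW⟩ := hu
  refine ⟨c, σ, hσS, ?_⟩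
  intro ρ hP hC m hNE
  have hrec := hσW ρ hP hC
  constructor
  · have h1 := hrec m
    rw [ELcap_of_no_R w c ρ m (fun i hi => (hNE i hi).1)] at h1
    exact h1
  · intro hwn
    refine ⟨c, shiftStr σ (prefixList ρ m), shiftStr_isStrategy A hσS _, ?_⟩
    intro ρ' hP' hC'
    have h0 : ρ' 0 = ρ (m+1) := hP'.1
    have hPf : (fromV A u).Play (splice ρ m ρ') := splice_play (fromV A u) hP h0 hP'.2
    have hCf : A.ConsistentWith A.V0 σ (splice ρ m ρ') :=
      splice_consistent A hC h0 hC'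
    have hrecf := hσW _ hPf hCf
    intro n
    have hR : w (splice ρ m ρ' m) (splice ρ m ρ' (m+1)) = none := by
      rw [splice_val ρ m ρ' h0 (by omega), splice_val ρ m ρ' h0 (by omega)]
      exact hwn
    have hsh := ELcap_shift w c (splice ρ m ρ') ρ' m hR (splice_shift ρ m ρ') n
    rw [← hsh]
    exact hrecf (m+1+n)

lemma Cand_sub_Dpred : Cand A w ⊆ Dpred A w := by
  apply Dpred_coind
  rintro ⟨u, b⟩ ⟨σ, hσ, hcond⟩
  by_cases h0 : u ∈ A.V0
  · have hE : A.E u (σ [u]) := by simpa using hσ [] u h0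
    refine Or.inl ⟨h0, σ [u], hE, ?_⟩
    obtain ⟨hcp, hcc⟩ := canon_play A hσ hE (fun _ => rfl)
    have hc := hcond _ hcp hcc
    cases hwn : w u (σ [u]) with
    | none =>
      have h2 := (hc 0 (fun i hi => absurd hi (by omega))).2
      exact Or.inl ⟨hwn, h2 hwn⟩
    | some k =>
      by_cases hA' : σ [u] ∈ AttrR A w
      · exact Or.inr (Or.inl hA')
      · have hNE1 : NoExit A w (consP u (bp A (shiftStr σ [u]) (σ [u]))) 1 := by
          intro i hi
          have : i = 0 := by omega
          subst this
          exact ⟨by simpa using Option.some_ne_none k ∘ (hwn ▸ id), hA'⟩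
        have h1 := (hc 1 hNE1).1
        have hSW1 : SW w (consP u (bp A (shiftStr σ [u]) (σ [u]))) 1 = k := by
          rw [SW_succ, SW_zero]
          show (0 : ℤ) + (w u (σ [u])).getD 0 = k
          rw [hwn]
          simp
        rw [hSW1] at h1
        refine Or.inr (Or.inr ⟨k, ((b : ℤ) + k).toNat, hwn,
          (Int.toNat_of_nonneg h1).symm, ?_⟩)
        exact Cand_shift A w hσ hcond hE hwn hA'
          ((Int.toNat_of_nonneg h1).symm) (fun _ => rfl)
  · refine Or.inr ⟨h0, fun u' hE => ?_⟩
    obtain ⟨hcp, hcc⟩ := canon_play A hσ hE (fun h => absurd h h0)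
    have hc := hcond _ hcp hcc
    cases hwn : w u u' with
    | none =>
      have h2 := (hc 0 (fun i hi => absurd hi (by omega))).2
      exact Or.inl ⟨hwn, h2 hwn⟩
    | some k =>
      by_cases hA' : u' ∈ AttrR A w
      · exact Or.inr (Or.inl hA')
      · have hNE1 : NoExit A w (consP u (bp A (shiftStr σ [u]) u')) 1 := by
          intro i hi
          have : i = 0 := by omega
          subst this
          exact ⟨by simpa using Option.some_ne_none k ∘ (hwn ▸ id), hA'⟩
        have h1 := (hc 1 hNE1).1
        have hSW1 : SW w (consP u (bp A (shiftStr σ [u]) u')) 1 = k := by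
          rw [SW_succ, SW_zero]
          show (0 : ℤ) + (w u u').getD 0 = k
          rw [hwn]
          simp
        rw [hSW1] at h1
        refine Or.inr (Or.inr ⟨k, ((b : ℤ) + k).toNat, hwn,
          (Int.toNat_of_nonneg h1).symm, ?_⟩)
        exact Cand_shift A w hσ hcond hE hwn hA'
          ((Int.toNat_of_nonneg h1).symm) (fun h => absurd h h0)

/-- **Completeness**: every winning vertex is in the attractor or in the
bounded-drop safety region with budget `(n-1)·W`. -/
lemma Ywin_cover (W : ℕ) (hneg : RechargeWeights A w)
    (hW : ∀ u v, A.E u v → ∀ k : ℤ, w u v = some k → -(W : ℤ) ≤ k)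
    {u : V} (hu : u ∈ Ywin A w) :
    u ∈ AttrR A w ∨ (u ∉ AttrR A w ∧ (u, (Fintype.card V - 1) * W) ∈ Dpred A w) := by
  by_cases hA : u ∈ AttrR A w
  · exact Or.inl hA
  · obtain ⟨c, hc⟩ := Ywin_to_Cand A w hu
    have hD : (u, c) ∈ Dpred A w := Cand_sub_Dpred A w hc
    exact Or.inr ⟨hA, Dpred_at_bound A w W hneg hW ⟨c, hD⟩ hA⟩

end Completeness

end RC

namespace RC

open Classical

section Soundness

variable {V : Type} [Fintype V] (A : Arena V) (w : V → V → Option ℤ)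

/-- a good positional move -/
def moveok (v v' : V) : Prop :=
  (v ∈ AttrR A w → aok A w (attr A w (rk A w v - 1)) v v') ∧
  (v ∉ AttrR A w → Dfin A w v → dok A w (Dpred A w) v v' (mv A w v))

lemma exists_move (v : V) (h0 : v ∈ A.V0) : ∃ v', A.E v v' ∧ moveok A w v v' := by
  by_cases hA : v ∈ AttrR A w
  · obtain ⟨h1, h2, h3⟩ := rk_spec A w hA
    rcases h3 with ⟨-, v', hE, hk⟩ | ⟨hn, -⟩
    · exact ⟨v', hE, fun _ => hk, fun hn _ => absurd hA hn⟩
    · exact absurd h0 hn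
  · by_cases hD : Dfin A w v
    · have hstep := Dpred_dest A w (mv_mem A w hD)
      rcases hstep with ⟨-, v', hE, hd⟩ | ⟨hn, -⟩
      · exact ⟨v', hE, fun hA' => absurd hA' hA, fun _ _ => hd⟩
      · exact absurd h0 hn
    · obtain ⟨v', hE⟩ := A.succ v
      exact ⟨v', hE, fun hA' => absurd hA' hA, fun _ hD' => absurd hD' hD⟩

/-- the positional strategy -/
noncomputable def sigpos (v : V) : V :=
  if h0 : v ∈ A.V0 then (exists_move A w v h0).choose else (A.succ v).choose

lemma sigpos_edge (v : V) : A.E v (sigpos A w v) := by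
  unfold sigpos
  by_cases h0 : v ∈ A.V0
  · rw [dif_pos h0]
    exact (exists_move A w v h0).choose_spec.1
  · rw [dif_neg h0]
    exact (A.succ v).choose_spec

lemma sigpos_ok {v : V} (h0 : v ∈ A.V0) : moveok A w v (sigpos A w v) := by
  unfold sigpos
  rw [dif_pos h0]
  exact (exists_move A w v h0).choose_spec.2

/-- the invariant tying the current vertex to the current energy level -/
def Inv (W : ℕ) (v : V) (e : ℤ) : Prop :=
  (v ∈ AttrR A w ∧ ((rk A w v : ℤ) - 1) * (W : ℤ) ≤ e) ∨
  (v ∉ AttrR A w ∧ (v, (Fintype.card V - 1) * W) ∈ Dpred A w ∧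
    (mv A w v : ℤ) + (Fintype.card V : ℤ) * (W : ℤ) ≤ e)

lemma Inv_nonneg {W : ℕ} {v : V} {e : ℤ} (h : Inv A w W v e) : 0 ≤ e := by
  rcases h with ⟨hA, he⟩ | ⟨-, -, he⟩
  · have h1 := (rk_spec A w hA).1
    have : (0 : ℤ) ≤ ((rk A w v : ℤ) - 1) * (W : ℤ) := by
      apply mul_nonneg _ (by positivity)
      omega
    omega
  · have : (0:ℤ) ≤ (Fintype.card V : ℤ) * (W : ℤ) := by positivity
    omega

lemma cast_capfull (hn1 : 1 ≤ Fintype.card V) :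
    ((3 * (Fintype.card V - 1) * W : ℕ) : ℤ) = 3 * ((Fintype.card V : ℤ) - 1) * (W : ℤ) := by
  push_cast [hn1]
  ring

lemma cast_capB (hn1 : 1 ≤ Fintype.card V) :
    (((Fintype.card V - 1) * W : ℕ) : ℤ) = ((Fintype.card V : ℤ) - 1) * (W : ℤ) := by
  push_cast [hn1]
  ring

lemma Inv_entry (W : ℕ) (hneg : RechargeWeights A w)
    (hW : ∀ u v, A.E u v → ∀ k : ℤ, w u v = some k → -(W : ℤ) ≤ k)
    (hn2 : 2 ≤ Fintype.card V) {v : V} (hv : v ∈ Ywin A w) :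
    Inv A w W v ((3 * (Fintype.card V - 1) * W : ℕ) : ℤ) := by
  have hn1 : 1 ≤ Fintype.card V := by omega
  rw [cast_capfull hn1]
  rcases Ywin_cover A w W hneg hW hv with hA | ⟨hA, hD⟩
  · left
    refine ⟨hA, ?_⟩
    obtain ⟨h1, h2, -⟩ := rk_spec A w hA
    have hr : ((rk A w v : ℤ) - 1) ≤ 3 * ((Fintype.card V : ℤ) - 1) := by
      have : (rk A w v : ℤ) ≤ (Fintype.card V : ℤ) := by exact_mod_cast h2
      omega
    nlinarith [Int.ofNat_nonneg W]
  · right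
    refine ⟨hA, hD, ?_⟩
    have hmv : (mv A w v : ℤ) ≤ ((Fintype.card V : ℤ) - 1) * (W : ℤ) := by
      have := mv_le A w hD
      calc (mv A w v : ℤ) ≤ (((Fintype.card V - 1) * W : ℕ) : ℤ) := by exact_mod_cast this
        _ = ((Fintype.card V : ℤ) - 1) * (W : ℤ) := cast_capB hn1
    have hN : (2 : ℤ) ≤ (Fintype.card V : ℤ) := by exact_mod_cast hn2
    nlinarith [Int.ofNat_nonneg W]

/-- the next energy level along an edge -/
def nextE (W : ℕ) (e : ℤ) (v v' : V) : ℤ :=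
  match w v v' with
  | none => ((3 * (Fintype.card V - 1) * W : ℕ) : ℤ)
  | some k => e + k

lemma Inv_step (W : ℕ) (hneg : RechargeWeights A w)
    (hW : ∀ u v, A.E u v → ∀ k : ℤ, w u v = some k → -(W : ℤ) ≤ k)
    (hn2 : 2 ≤ Fintype.card V) {v v' : V} {e : ℤ}
    (hI : Inv A w W v e) (hE : A.E v v') (hmove : v ∈ A.V0 → v' = sigpos A w v) :
    Inv A w W v' (nextE w W e v v') := by
  have hn1 : 1 ≤ Fintype.card V := by omega
  have hWnn : (0:ℤ) ≤ (W:ℤ) := Int.ofNat_nonneg W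
  have hNc : (2:ℤ) ≤ (Fintype.card V : ℤ) := by exact_mod_cast hn2
  rcases hI with ⟨hA, he⟩ | ⟨hA, hD, he⟩
  · -- attractor mode
    obtain ⟨h1, h2, h3⟩ := rk_spec A w hA
    have hclause : aok A w (attr A w (rk A w v - 1)) v v' := by
      by_cases h0 : v ∈ A.V0
      · rw [hmove h0]
        exact (sigpos_ok A w h0).1 hA
      · rcases h3 with ⟨hv0, -⟩ | ⟨-, hall⟩
        · exact absurd hv0 h0
        · exact hall v' hE
    rcases hclause with ⟨hwn, hY⟩ | hT
    · have := Inv_entry A w W hneg hW hn2 hY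
      simpa [nextE, hwn] using this
    · have hA' : v' ∈ AttrR A w := attr_saturates A w _ hT
      have hrk' : rk A w v' ≤ rk A w v - 1 := rk_le_of_mem A w hT
      have hrkZ : (rk A w v' : ℤ) ≤ (rk A w v : ℤ) - 1 := by omega
      left
      refine ⟨hA', ?_⟩
      cases hwk : w v v' with
      | none =>
        have hgoal : ((rk A w v' : ℤ) - 1) * (W:ℤ) ≤ ((3 * (Fintype.card V - 1) * W : ℕ) : ℤ) := by
          rw [cast_capfull hn1]
          have : (rk A w v' : ℤ) ≤ (Fintype.card V : ℤ) :=
            by exact_mod_cast (rk_spec A w hA').2.1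
          nlinarith
        simpa [nextE, hwk] using hgoal
      | some k =>
        have hgoal : ((rk A w v' : ℤ) - 1) * (W:ℤ) ≤ e + k := by
          have hk := hW v v' hE k hwk
          nlinarith
        simpa [nextE, hwk] using hgoal
  · -- safety mode
    have hDf : Dfin A w v := ⟨_, hD⟩
    have hmvB : (mv A w v : ℤ) ≤ ((Fintype.card V : ℤ) - 1) * (W:ℤ) := by
      have := mv_le A w hD
      calc (mv A w v : ℤ) ≤ (((Fintype.card V - 1) * W : ℕ) : ℤ) := by exact_mod_cast this
        _ = _ := cast_capB hn1
    have hclause : dok A w (Dpred A w) v v' (mv A w v) := by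
      by_cases h0 : v ∈ A.V0
      · rw [hmove h0]
        exact (sigpos_ok A w h0).2 hA hDf
      · have hstep := Dpred_dest A w (mv_mem A w hDf)
        rcases hstep with ⟨hv0, -⟩ | ⟨-, hall⟩
        · exact absurd hv0 h0
        · exact hall v' hE
    rcases hclause with ⟨hwn, hY⟩ | hA' | ⟨k, b', hwk, heq, hD'⟩
    · have := Inv_entry A w W hneg hW hn2 hY
      simpa [nextE, hwn] using this
    · left
      refine ⟨hA', ?_⟩
      have hrk' : (rk A w v' : ℤ) ≤ (Fintype.card V : ℤ) := by
        exact_mod_cast (rk_spec A w hA').2.1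
      cases hwk : w v v' with
      | none =>
        have hgoal : ((rk A w v' : ℤ) - 1) * (W:ℤ) ≤ ((3 * (Fintype.card V - 1) * W : ℕ) : ℤ) := by
          rw [cast_capfull hn1]
          nlinarith
        simpa [nextE, hwk] using hgoal
      | some k =>
        have hgoal : ((rk A w v' : ℤ) - 1) * (W:ℤ) ≤ e + k := by
          have hk := hW v v' hE k hwk
          have hmvnn : (0:ℤ) ≤ (mv A w v : ℤ) := Int.ofNat_nonneg _
          nlinarith
        simpa [nextE, hwk] using hgoal
    · -- weighted step within the safety region
      have hDf' : Dfin A w v' := ⟨b', hD'⟩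
      have hmv' : mv A w v' ≤ b' := mv_le A w hD'
      have hkneg : k ≤ 0 := hneg v v' hE k hwk
      have hgoal : Inv A w W v' (e + k) := by
        by_cases hA' : v' ∈ AttrR A w
        · left
          refine ⟨hA', ?_⟩
          have hrk' : (rk A w v' : ℤ) ≤ (Fintype.card V : ℤ) := by
            exact_mod_cast (rk_spec A w hA').2.1
          have hb'nn : (0:ℤ) ≤ (b' : ℤ) := Int.ofNat_nonneg _
          nlinarith
        · right
          refine ⟨hA', ?_, ?_⟩
          · apply Dpred_mono_budget A w (mv_mem A w hDf')
            have hb'le : (b' : ℤ) ≤ (((Fintype.card V - 1) * W : ℕ) : ℤ) := by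
              rw [cast_capB hn1]
              have : (mv A w v : ℤ) + k = (b' : ℤ) := heq
              omega
            have : (mv A w v' : ℤ) ≤ (b' : ℤ) := by exact_mod_cast hmv'
            exact_mod_cast le_trans this hb'le
          · have h1 : (mv A w v' : ℤ) ≤ (b' : ℤ) := by exact_mod_cast hmv'
            have h2 : (mv A w v : ℤ) + k = (b' : ℤ) := heq
            omega
      simpa [nextE, hwk] using hgoal

lemma ELcap_succ_eq (W : ℕ) (ρ : ℕ → V) (m : ℕ) :
    ELcap w (3 * (Fintype.card V - 1) * W) ρ (m+1) =
      nextE w W (ELcap w (3 * (Fintype.card V - 1) * W) ρ m) (ρ m) (ρ (m+1)) := rfl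

/-- **Soundness**: the positional strategy wins with capacity `3(n-1)W`. -/
lemma main_sound (W : ℕ) (hneg : RechargeWeights A w)
    (hW : ∀ u v, A.E u v → ∀ k : ℤ, w u v = some k → -(W : ℤ) ≤ k)
    (hn2 : 2 ≤ Fintype.card V) (hY : A.vI ∈ Ywin A w) :
    A.WinningStrategy A.V0 (Recharge w (3 * (Fintype.card V - 1) * W))
      (fun l => sigpos A w (l.getLastD A.vI)) := by
  constructor
  · intro h v hv
    show A.E v (sigpos A w ((h ++ [v]).getLastD A.vI))
    rw [List.getLastD_concat]
    exact sigpos_edge A w v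
  · intro ρ hP hC
    have hInv : ∀ m, Inv A w W (ρ m)
        (ELcap w (3 * (Fintype.card V - 1) * W) ρ m) := by
      intro m
      induction m with
      | zero =>
        show Inv A w W (ρ 0) ((3 * (Fintype.card V - 1) * W : ℕ) : ℤ)
        rw [hP.1]
        exact Inv_entry A w W hneg hW hn2 hY
      | succ m ih =>
        rw [ELcap_succ_eq w W]
        apply Inv_step A w W hneg hW hn2 ih (hP.2 m)
        intro h0
        have h1 := hC m h0
        rw [h1]
        show sigpos A w ((prefixList ρ m).getLastD A.vI) = _
        rw [prefixList_getLastD]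
    intro m
    exact Inv_nonneg A w (hInv m)

end Soundness

end RC

namespace RC

open Classical

section Final

variable {V : Type} [Fintype V] (A : Arena V) (w : V → V → Option ℤ)

/-- any positional strategy is finite-state of size three -/
lemma fin3 (σpos : V → V) :
    A.FiniteStateOfSize 3 (fun l => σpos (l.getLastD A.vI)) := by
  refine ⟨Fin 3, inferInstance, ⟨0, fun m _ _ => m⟩, by simp, fun v _ => σpos v, ?_⟩
  intro h v
  show σpos ((h ++ [v]).getLastD A.vI) = σpos v
  rw [List.getLastD_concat]

lemma subsingleton_case (W : ℕ) (hneg : RechargeWeights A w)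
    (hsub : Subsingleton V) (h : ∃ cap : ℕ, A.Player0Wins (Recharge w cap)) :
    A.WinningStrategy A.V0 (Recharge w (3 * (Fintype.card V - 1) * W))
      (fun l => (fun _ : V => A.vI) (l.getLastD A.vI)) := by
  have hEvv : A.E A.vI A.vI := by
    obtain ⟨v', hE⟩ := A.succ A.vI
    rwa [Subsingleton.elim v' A.vI] at hE
  constructor
  · intro hist v hv
    have : A.E v v := by
      obtain ⟨v', hE⟩ := A.succ v
      rwa [Subsingleton.elim v' v] at hE
    simpa [Subsingleton.elim A.vI v] using this
  · intro ρ hP hC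
    obtain ⟨c0, σ0, hσ0S, hσ0W⟩ := h
    have hplay0 : A.Play (fun _ => A.vI) := ⟨rfl, fun _ => hEvv⟩
    have hcons0 : A.ConsistentWith A.V0 σ0 (fun _ => A.vI) :=
      fun n _ => Subsingleton.elim _ _
    have hrec := hσ0W _ hplay0 hcons0
    cases hw0 : w A.vI A.vI with
    | none =>
      have hconst : ∀ m, ELcap w (3 * (Fintype.card V - 1) * W) ρ m =
          ((3 * (Fintype.card V - 1) * W : ℕ) : ℤ) := by
        intro m
        induction m with
        | zero => rfl
        | succ m ih =>
          have hwm : w (ρ m) (ρ (m+1)) = none := by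
            rw [Subsingleton.elim (ρ m) A.vI, Subsingleton.elim (ρ (m+1)) A.vI]
            exact hw0
          show (match w (ρ m) (ρ (m+1)) with
            | none => ((3 * (Fintype.card V - 1) * W : ℕ) : ℤ)
            | some k => ELcap w (3 * (Fintype.card V - 1) * W) ρ m + k) = _
          rw [hwm]
      intro m
      rw [hconst m]
      positivity
    | some k =>
      have hkneg : k ≤ 0 := hneg A.vI A.vI hEvv k hw0
      have hel0 : ∀ m : ℕ, ELcap w c0 (fun _ => A.vI) m = (c0 : ℤ) + m * k := by
        intro m
        induction m with
        | zero => simp [ELcap]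
        | succ m ih =>
          show (match w A.vI A.vI with
            | none => (c0 : ℤ)
            | some k => ELcap w c0 (fun _ => A.vI) m + k) = _
          rw [hw0, ih]
          push_cast
          ring
      have hk0 : k = 0 := by
        by_contra hk
        have hklt : k ≤ -1 := by omega
        have h1 := hrec (c0 + 1)
        rw [hel0 (c0+1)] at h1
        push_cast at h1
        have hc0 : (0:ℤ) ≤ c0 := Int.ofNat_nonneg c0
        have h2 : ((c0:ℤ)+1) * k ≤ -((c0:ℤ)+1) := by nlinarith
        linarith
      subst hk0
      have hconst : ∀ m, ELcap w (3 * (Fintype.card V - 1) * W) ρ m =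
          ((3 * (Fintype.card V - 1) * W : ℕ) : ℤ) := by
        intro m
        induction m with
        | zero => rfl
        | succ m ih =>
          have hwm : w (ρ m) (ρ (m+1)) = some 0 := by
            rw [Subsingleton.elim (ρ m) A.vI, Subsingleton.elim (ρ (m+1)) A.vI]
            exact hw0
          show (match w (ρ m) (ρ (m+1)) with
            | none => ((3 * (Fintype.card V - 1) * W : ℕ) : ℤ)
            | some k => ELcap w (3 * (Fintype.card V - 1) * W) ρ m + k) = _
          rw [hwm, ih]
          ring
      intro m
      rw [hconst m]
      positivity

end Final

end RC


/-- If Player 0 wins the recharge game for some capacity, then she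
wins it for capacity `3·(n-1)·W`, with a finite-state winning strategy of size
three. -/
theorem recharge_cap_bound {V : Type} [Fintype V] (A : Arena V)
    (w : V → V → Option ℤ) (W : ℕ)
    (hneg : RechargeWeights A w)
    (hW : ∀ u v, A.E u v → ∀ k : ℤ, w u v = some k → -(W : ℤ) ≤ k)
    (h : ∃ cap : ℕ, A.Player0Wins (Recharge w cap)) :
    ∃ σ : List V → V,
      A.WinningStrategy A.V0 (Recharge w (3 * (Fintype.card V - 1) * W)) σ ∧
      A.FiniteStateOfSize 3 σ := by
  by_cases hn2 : 2 ≤ Fintype.card V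
  · have hY : A.vI ∈ RC.Ywin A w := by
      obtain ⟨cap, σ, hσ⟩ := h
      exact ⟨cap, σ, hσ⟩
    exact ⟨_, RC.main_sound A w W hneg hW hn2 hY, RC.fin3 A (RC.sigpos A w)⟩
  · have hsub : Subsingleton V := by
      have h1 : 0 < Fintype.card V := Fintype.card_pos_iff.mpr ⟨A.vI⟩
      have : Fintype.card V ≤ 1 := by omega
      exact Fintype.card_le_one_iff_subsingleton.mp this
    exact ⟨_, RC.subsingleton_case A w W hneg hsub h, RC.fin3 A (fun _ => A.vI)⟩
end

section
/- Fix n ≥ 2 and W ≥ 1, and let A_n be the arena consisting of a single directed cycle v_0 → v_1 → ⋯ → v_{n−1} → v_0 in which all vertices belong to Player 0, v_0 is the initial vertex, the edge (v_{n−1}, v_0) is labelled R, and every other edge has weight −W. Then Player 0 wins (A_n, Recharge(w, cap)) if, and only if, cap ≥ (n−1)·W. In particular, the capacity bound (n−1)·W for winning recharge games is tight. -/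
/-- The cycle arena on `n = m + 2 ≥ 2` vertices: all vertices belong to Player 0,
each vertex `v` has the unique successor `v + 1`, and the initial vertex is `0`. -/
def cycleArena (m : ℕ) : Arena (Fin (m + 2)) where
  V0 := Set.univ
  E := fun u v => v = u + 1
  vI := 0
  succ := fun u => ⟨u + 1, rfl⟩

/-- The recharge weight function of the cycle: the edge leaving the last vertex is
labelled `R`, all other edges have weight `-W`. -/
def cycleW (m W : ℕ) : Fin (m + 2) → Fin (m + 2) → Option ℤ :=
  fun u _ => if u = Fin.last (m + 1) then none else some (-(W : ℤ))


open Fin.NatCast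

lemma cycle_play_eq (m : ℕ) (ρ : ℕ → Fin (m + 2)) (h : (cycleArena m).Play ρ) :
    ∀ n, ρ n = (n : Fin (m + 2)) := by
  intro n
  induction n with
  | zero => simpa [cycleArena] using h.1
  | succ n ih =>
    have := h.2 n
    simp only [cycleArena] at this
    rw [this, ih]
    push_cast
    ring

lemma cycle_ELcap (m W cap : ℕ) (ρ : ℕ → Fin (m + 2)) (h : (cycleArena m).Play ρ) :
    ∀ n, ELcap (cycleW m W) cap ρ n = (cap : ℤ) - (n % (m + 2) : ℕ) * W := by
  intro n
  induction n with
  | zero => simp [ELcap]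
  | succ n ih =>
    have hv : ((ρ n : Fin (m + 2)) : ℕ) = n % (m + 2) := by
      rw [cycle_play_eq m ρ h n, Fin.val_natCast]
    have hlt : n % (m + 2) < m + 2 := Nat.mod_lt _ (by omega)
    by_cases hc : n % (m + 2) = m + 1
    · have heq : ρ n = Fin.last (m + 1) := by
        apply Fin.ext; rw [hv, hc]; rfl
      have hmod : (n + 1) % (m + 2) = 0 := by
        rw [Nat.add_mod, hc, Nat.mod_eq_of_lt (show (1:ℕ) < m + 2 by omega)]
        exact Nat.mod_self _
      simp [ELcap, cycleW, heq, hmod]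
    · have hne : ρ n ≠ Fin.last (m + 1) := by
        intro hx
        apply hc
        have := congrArg Fin.val hx
        rw [hv] at this
        simpa using this
      have hmod : (n + 1) % (m + 2) = n % (m + 2) + 1 := by
        rw [Nat.add_mod]
        have h1 : (1 : ℕ) % (m + 2) = 1 := Nat.mod_eq_of_lt (by omega)
        rw [h1, Nat.mod_eq_of_lt (by omega)]
      simp only [ELcap, cycleW, hne, if_false, ih, hmod]
      push_cast
      ring

/-- For `n = m + 2 ≥ 2` and `W ≥ 1`, Player 0 wins the cycle
recharge game with capacity `cap` iff `cap ≥ (n - 1)·W`; thus the capacity bound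
`(n-1)·W` is tight. -/
theorem cycle_recharge_iff (m W : ℕ) (hW : 1 ≤ W) (cap : ℕ) :
    (cycleArena m).Player0Wins (Recharge (cycleW m W) cap) ↔ (m + 1) * W ≤ cap := by
  constructor
  · rintro ⟨σ, hstrat, hwin⟩
    set ρ : ℕ → Fin (m + 2) := fun n => (n : Fin (m + 2)) with hρ
    have hplay : (cycleArena m).Play ρ := by
      constructor
      · simp [hρ, cycleArena]
      · intro n
        show ρ (n + 1) = ρ n + 1
        simp only [hρ]
        push_cast
        ring
    have hcons : (cycleArena m).ConsistentWith (cycleArena m).V0 σ ρ := by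
      intro n _
      have hpre : prefixList ρ n = ((List.range n).map ρ) ++ [ρ n] := by
        simp [prefixList, List.range_succ]
      have hs := hstrat ((List.range n).map ρ) (ρ n) (by trivial)
      have h2 := hplay.2 n
      rw [hpre]
      simp only [cycleArena] at hs h2
      rw [hs]
      exact h2
    have hmem := hwin ρ hplay hcons
    have h1 := hmem (m + 1)
    rw [cycle_ELcap m W cap ρ hplay (m + 1)] at h1
    have hmod : (m + 1) % (m + 2) = m + 1 := Nat.mod_eq_of_lt (by omega)
    rw [hmod] at h1
    have : ((m + 1) * W : ℤ) ≤ (cap : ℤ) := by push_cast at h1 ⊢; linarith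
    exact_mod_cast this
  · intro hcap
    refine ⟨fun l => (l.getLast?.getD 0) + 1, ?_, ?_⟩
    · intro h v _
      show _ = _ + 1
      simp
    · intro ρ hplay _
      intro n
      rw [cycle_ELcap m W cap ρ hplay n]
      have hlt : n % (m + 2) ≤ m + 1 := by
        have := Nat.mod_lt n (show 0 < m + 2 by omega)
        omega
      have : (n % (m + 2)) * W ≤ (m + 1) * W := Nat.mul_le_mul_right W hlt
      have h2 : ((n % (m + 2)) * W : ℤ) ≤ (cap : ℤ) := by
        exact_mod_cast le_trans this hcap
      push_cast at h2 ⊢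
      linarith
end
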